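/- arXiv:1001.2180 — 6 statements merged into one kernel-verified Lean document; each statement's English description precedes it below -/
import Mathlib

section
/- For every positive integer n and every partition λ of n, the transition probabilities of the q-Plancherel growth process sum to 1: ∑_{Λ: λ↗Λ} p_q(λ,Λ) = 1, where p_q(λ,Λ) = q^{b(Λ)-b(λ)} · (∏_{□∈λ} {h(□)}_q)/(∏_{□∈Λ} {h(□)}_q), the sum being over all Young diagrams Λ obtained from λ by adding one box. -/
open scoped BigOperators

/-- The hook length of the cell `c = (i,j)` of a Young diagram `μ` (0-indexed). -/
def hookLen (μ : YoungDiagram) (c : ℕ × ℕ) : ℕ :=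
  μ.rowLen c.1 + μ.colLen c.2 - c.1 - c.2 - 1

/-- The `q`-analog `{m}_q = (q^m - 1)/(q - 1)`. -/
noncomputable def qint (q : ℝ) (m : ℕ) : ℝ := (q ^ m - 1) / (q - 1)

/-- The statistic `b(λ) = ∑_{i ≥ 1} (i-1) λ_i`. -/
def bstat (μ : YoungDiagram) : ℕ := ∑ c ∈ μ.cells, c.1

/-- The transition probability of the `q`-Plancherel growth process,
`p_q(λ,Λ) = q^{b(Λ)-b(λ)} ∏_{□∈λ}{h(□)}_q / ∏_{□∈Λ}{h(□)}_q`. -/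
noncomputable def qTransition (q : ℝ) (μ Λ : YoungDiagram) : ℝ :=
  q ^ ((bstat Λ : ℤ) - (bstat μ : ℤ)) *
    (∏ c ∈ μ.cells, qint q (hookLen μ c)) / ∏ c ∈ Λ.cells, qint q (hookLen Λ c)


open Finset Polynomial

lemma qpow_inj {q : ℝ} (hq0 : 0 < q) (hq1 : q ≠ 1) {a b : ℕ} (h : q ^ a = q ^ b) : a = b := by
  have hlog : Real.log q ≠ 0 := Real.log_ne_zero_of_pos_of_ne_one hq0 hq1
  have := congrArg Real.log h
  rw [Real.log_pow, Real.log_pow] at this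
  exact_mod_cast mul_right_cancel₀ hlog this

lemma alg_identity (q : ℝ) (hq0 : 0 < q) (hq1 : q ≠ 1) (L : ℕ) (hL : 0 < L)
    (x : ℕ → ℕ) (hx : ∀ i j, i < j → j < L → x j < x i) (hx0 : x (L - 1) = 0) :
    ∑ r ∈ Finset.range L, (q - 1) / (q ^ (x r + 1) - 1) *
      ∏ j ∈ (Finset.range L).erase r, (q ^ (x r + 1) - q ^ (x j)) / (q ^ (x r) - q ^ (x j)) = 1 := by
  have hq0' : q ≠ 0 := ne_of_gt hq0
  have hpow0 : ∀ m : ℕ, q ^ m ≠ 0 := fun m => pow_ne_zero m hq0'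
  have hpowne : ∀ a b : ℕ, a ≠ b → q ^ a - q ^ b ≠ 0 := by
    intro a b hab h
    exact hab (qpow_inj hq0 hq1 (by linarith [sub_eq_zero.mp h]))
  have hxinj : ∀ i ∈ Finset.range L, ∀ j ∈ Finset.range L, x i = x j → i = j := by
    intro i hi j hj hxy
    simp only [mem_range] at hi hj
    by_contra hne
    rcases lt_or_gt_of_ne hne with h | h
    · exact absurd hxy (ne_of_gt (hx i j h hj))
    · exact absurd hxy.symm (ne_of_gt (hx j i h hi))
  set v : ℕ → ℝ := fun i => if i = L then q⁻¹ else q ^ (x i) with hv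
  have hvlt : ∀ i, i < L → v i = q ^ (x i) := by
    intro i hi; simp only [hv, if_neg (Nat.ne_of_lt hi)]
  have hvL : v L = q⁻¹ := by simp [hv]
  have hinvne : ∀ a : ℕ, q⁻¹ ≠ q ^ a := by
    intro a h
    have h2 : q ^ (0:ℕ) = q ^ (a+1) := by
      have := congrArg (fun t => t * q) h
      field_simp at this
      rw [pow_zero, pow_succ, mul_comm, ← this]
    exact Nat.succ_ne_zero a (qpow_inj hq0 hq1 h2).symm
  have hinj : Set.InjOn v (Finset.range (L+1)) := by
    intro i hi j hj hij
    simp only [coe_range, Set.mem_Iio] at hi hj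
    rcases Nat.lt_succ_iff_lt_or_eq.mp hi with hi' | rfl
    · rcases Nat.lt_succ_iff_lt_or_eq.mp hj with hj' | rfl
      · rw [hvlt i hi', hvlt j hj'] at hij
        exact hxinj i (mem_range.mpr hi') j (mem_range.mpr hj') (qpow_inj hq0 hq1 hij)
      · rw [hvlt i hi', hvL] at hij; exact absurd hij.symm (hinvne _)
    · rcases Nat.lt_succ_iff_lt_or_eq.mp hj with hj' | rfl
      · rw [hvL, hvlt j hj'] at hij; exact absurd hij (hinvne _)
      · rfl
  set f : Polynomial ℝ := ∏ j ∈ Finset.range L, (C q * X - C (q ^ (x j))) with hf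
  have hdeg : f.degree < (Finset.range (L+1)).card := by
    rw [hf]
    have hd1 : ∀ j ∈ Finset.range L, (C q * X - C (q ^ (x j))).degree = 1 := by
      intro j _
      rw [sub_eq_add_neg, ← C_neg]
      exact degree_linear hq0'
    rw [degree_prod, Finset.sum_congr rfl hd1]
    simp only [Finset.sum_const, card_range, nsmul_eq_mul, mul_one]
    exact_mod_cast Nat.lt_succ_self L
  have key := Lagrange.eq_interpolate (f := f) hinj hdeg
  have keval := congrArg (fun p => Polynomial.eval 0 p) key
  simp only [Lagrange.interpolate_apply, eval_finset_sum, eval_mul, eval_C] at keval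
  have hevf : ∀ z : ℝ, f.eval z = ∏ j ∈ Finset.range L, (q * z - q ^ (x j)) := by
    intro z; rw [hf, eval_prod]; exact Finset.prod_congr rfl (by intro j _; simp)
  have hfL : f.eval (v L) = 0 := by
    rw [hvL, hevf]
    refine Finset.prod_eq_zero (Finset.mem_range.mpr (Nat.sub_lt hL one_pos)) ?_
    rw [hx0, pow_zero, mul_inv_cancel₀ hq0', sub_self]
  have hbasis : ∀ r ∈ Finset.range L,
      Polynomial.eval 0 (Lagrange.basis (Finset.range (L+1)) v r)
        = ((q ^ (x r) - q⁻¹)⁻¹ * (-q⁻¹)) *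
          ∏ j ∈ (Finset.range L).erase r, ((q ^ (x r) - q ^ (x j))⁻¹ * (-(q ^ (x j)))) := by
    intro r hr
    rw [mem_range] at hr
    have hrL : r ≠ L := Nat.ne_of_lt hr
    have hmemL : L ∈ (Finset.range (L+1)).erase r := by
      simp [Finset.mem_erase, Ne.symm hrL]
    rw [Lagrange.basis, eval_prod, ← Finset.mul_prod_erase _ _ hmemL]
    have hset : ((Finset.range (L+1)).erase r).erase L = (Finset.range L).erase r := by
      ext a; simp only [Finset.mem_erase, Finset.mem_range]; omega
    rw [hset]
    congr 1
    · simp [Lagrange.basisDivisor, hvL, hvlt r hr]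
    · refine Finset.prod_congr rfl ?_
      intro j hj
      have hjL : j < L := Finset.mem_range.mp (Finset.mem_of_mem_erase hj)
      simp [Lagrange.basisDivisor, hvlt r hr, hvlt j hjL]
  have hLHS : f.eval 0 = ∏ j ∈ Finset.range L, (-(q ^ (x j))) := by
    rw [hevf]; exact Finset.prod_congr rfl (by intros; ring)
  rw [Finset.sum_range_succ, hfL, zero_mul, add_zero] at keval
  have hP : (∏ j ∈ Finset.range L, (-(q ^ (x j)))) ≠ 0 := by
    apply Finset.prod_ne_zero_iff.mpr
    intro j _
    simpa using hpow0 (x j)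
  have hterm : ∀ r ∈ Finset.range L,
      f.eval (v r) * Polynomial.eval 0 (Lagrange.basis (Finset.range (L+1)) v r)
        = (∏ j ∈ Finset.range L, (-(q ^ (x j)))) *
          ((q - 1) / (q ^ (x r + 1) - 1) *
            ∏ j ∈ (Finset.range L).erase r, (q ^ (x r + 1) - q ^ (x j)) / (q ^ (x r) - q ^ (x j))) := by
    intro r hr
    have hrL : r < L := Finset.mem_range.mp hr
    have hne1 : q ^ (x r + 1) - 1 ≠ 0 := by
      simpa using hpowne (x r + 1) 0 (Nat.succ_ne_zero _)
    have hne2 : q ^ (x r) - q⁻¹ ≠ 0 := by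
      intro h
      exact hinvne (x r) (sub_eq_zero.mp h).symm
    rw [hvlt r hrL, hevf, hbasis r hr]
    have hpow1 : (q : ℝ) * q ^ (x r) = q ^ (x r + 1) := by rw [pow_succ, mul_comm]
    simp only [hpow1]
    rw [← Finset.mul_prod_erase _ (fun j => q ^ (x r + 1) - q ^ (x j)) hr,
        ← Finset.mul_prod_erase _ (fun j => -(q ^ (x j))) hr]
    have hscal : (q ^ (x r + 1) - q ^ (x r)) * ((q ^ (x r) - q⁻¹)⁻¹ * (-q⁻¹))
        = (-(q ^ (x r))) * ((q - 1) / (q ^ (x r + 1) - 1)) := by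
      have h1 : q ^ (x r) - q⁻¹ = q⁻¹ * (q ^ (x r + 1) - 1) := by
        rw [pow_succ]
        field_simp
        try ring
      rw [h1, mul_inv, inv_inv]
      field_simp
      try ring
    have hE : (∏ j ∈ (Finset.range L).erase r, (q ^ (x r + 1) - q ^ (x j))) *
        (∏ j ∈ (Finset.range L).erase r, ((q ^ (x r) - q ^ (x j))⁻¹ * (-(q ^ (x j)))))
        = (∏ j ∈ (Finset.range L).erase r, (q ^ (x r + 1) - q ^ (x j)) / (q ^ (x r) - q ^ (x j))) *
          (∏ j ∈ (Finset.range L).erase r, (-(q ^ (x j)))) := by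
      rw [← Finset.prod_mul_distrib, ← Finset.prod_mul_distrib]
      refine Finset.prod_congr rfl ?_
      intro j _
      rw [div_eq_mul_inv]
      ring
    calc (q ^ (x r + 1) - q ^ (x r)) * (∏ j ∈ (Finset.range L).erase r, (q ^ (x r + 1) - q ^ (x j))) *
          ((q ^ (x r) - q⁻¹)⁻¹ * (-q⁻¹) *
            ∏ j ∈ (Finset.range L).erase r, ((q ^ (x r) - q ^ (x j))⁻¹ * (-(q ^ (x j)))))
        = ((q ^ (x r + 1) - q ^ (x r)) * ((q ^ (x r) - q⁻¹)⁻¹ * (-q⁻¹))) *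
          ((∏ j ∈ (Finset.range L).erase r, (q ^ (x r + 1) - q ^ (x j))) *
           (∏ j ∈ (Finset.range L).erase r, ((q ^ (x r) - q ^ (x j))⁻¹ * (-(q ^ (x j)))))) := by
            ring
      _ = ((-(q ^ (x r))) * ((q - 1) / (q ^ (x r + 1) - 1))) *
          ((∏ j ∈ (Finset.range L).erase r, (q ^ (x r + 1) - q ^ (x j)) / (q ^ (x r) - q ^ (x j))) *
           (∏ j ∈ (Finset.range L).erase r, (-(q ^ (x j))))) := by
            rw [hscal, hE]
      _ = (-(q ^ (x r)) * ∏ j ∈ (Finset.range L).erase r, (-(q ^ (x j)))) *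
          ((q - 1) / (q ^ (x r + 1) - 1) *
            ∏ j ∈ (Finset.range L).erase r, (q ^ (x r + 1) - q ^ (x j)) / (q ^ (x r) - q ^ (x j))) := by
            ring
  rw [hLHS, Finset.sum_congr rfl hterm, ← Finset.mul_sum] at keval
  exact (mul_left_cancel₀ hP (by rw [mul_one]; exact keval)).symm


namespace QP3aux

/-- helper: compute rowLen from a membership characterization -/
lemma rowLen_eq {ν : YoungDiagram} {i m : ℕ} (h : ∀ j, (i, j) ∈ ν ↔ j < m) : ν.rowLen i = m := by
  have hm := h m
  have hr := h (ν.rowLen i)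
  rw [YoungDiagram.mem_iff_lt_rowLen] at hm hr
  omega

lemma colLen_eq {ν : YoungDiagram} {j m : ℕ} (h : ∀ i, (i, j) ∈ ν ↔ i < m) : ν.colLen j = m := by
  have hm := h m
  have hr := h (ν.colLen j)
  rw [YoungDiagram.mem_iff_lt_colLen] at hm hr
  omega

variable (μ : YoungDiagram)

/-- The "addable row" condition. -/
def AddOK (r : ℕ) : Prop := r = 0 ∨ μ.rowLen r < μ.rowLen (r - 1)

instance (r : ℕ) : Decidable (AddOK μ r) := by unfold AddOK; infer_instance

lemma rowLen_ge_of_addOK {r i : ℕ} (h : AddOK μ r) (hi : i < r) :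
    μ.rowLen r + 1 ≤ μ.rowLen i := by
  rcases h with h | h
  · omega
  · exact le_trans (by omega) (μ.rowLen_anti i (r-1) (by omega))

lemma not_mem_corner (r : ℕ) : (r, μ.rowLen r) ∉ μ := by
  rw [YoungDiagram.mem_iff_lt_rowLen]; omega

lemma grow_lower {r : ℕ} (h : AddOK μ r) :
    IsLowerSet (↑(insert (r, μ.rowLen r) μ.cells) : Set (ℕ × ℕ)) := by
  intro a b hba ha
  simp only [Finset.coe_insert, Set.mem_insert_iff, Finset.mem_coe, YoungDiagram.mem_cells] at ha ⊢
  rcases ha with rfl | ha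
  · -- a = (r, rowLen r)
    obtain ⟨i, j⟩ := b
    have hir : i ≤ r := hba.1
    have hjs : j ≤ μ.rowLen r := hba.2
    by_cases hb : (i, j) = (r, μ.rowLen r)
    · exact Or.inl hb
    · right
      rw [YoungDiagram.mem_iff_lt_rowLen]
      rcases Nat.lt_or_ge i r with hi | hi
      · have := rowLen_ge_of_addOK μ h hi
        omega
      · have : i = r := le_antisymm hir hi
        subst this
        have : j ≠ μ.rowLen i := fun hj => hb (by rw [hj])
        omega
  · exact Or.inr (μ.isLowerSet hba ha)

/-- Adding a box at the end of row `r` (valid when `AddOK μ r`). -/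
def grow (r : ℕ) : YoungDiagram :=
  if h : AddOK μ r then ⟨insert (r, μ.rowLen r) μ.cells, grow_lower μ h⟩ else μ

lemma grow_cells {r : ℕ} (h : AddOK μ r) :
    (grow μ r).cells = insert (r, μ.rowLen r) μ.cells := by
  rw [grow, dif_pos h]

lemma mem_grow {r : ℕ} (h : AddOK μ r) {c : ℕ × ℕ} :
    c ∈ grow μ r ↔ c = (r, μ.rowLen r) ∨ c ∈ μ := by
  rw [← YoungDiagram.mem_cells, grow_cells μ h, Finset.mem_insert]
  rfl

lemma le_grow {r : ℕ} (h : AddOK μ r) : μ ≤ grow μ r := by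
  rw [← YoungDiagram.cells_subset_iff, grow_cells μ h]
  exact Finset.subset_insert _ _

lemma card_grow {r : ℕ} (h : AddOK μ r) : (grow μ r).card = μ.card + 1 := by
  show (grow μ r).cells.card = μ.cells.card + 1
  rw [grow_cells μ h, Finset.card_insert_of_notMem (not_mem_corner μ r)]

lemma rowLen_grow {r : ℕ} (h : AddOK μ r) (i : ℕ) :
    (grow μ r).rowLen i = if i = r then μ.rowLen i + 1 else μ.rowLen i := by
  apply rowLen_eq
  intro j
  rw [mem_grow μ h, YoungDiagram.mem_iff_lt_rowLen, Prod.mk.injEq]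
  by_cases hir : i = r
  · subst hir; rw [if_pos rfl]; omega
  · rw [if_neg hir]; omega

lemma colLen_grow {r : ℕ} (h : AddOK μ r) (j : ℕ) :
    (grow μ r).colLen j = if j = μ.rowLen r then μ.colLen j + 1 else μ.colLen j := by
  have hcol : μ.colLen (μ.rowLen r) = r := by
    apply colLen_eq
    intro i
    rw [YoungDiagram.mem_iff_lt_rowLen]
    constructor
    · intro hlt
      by_contra hge
      push_neg at hge
      have := μ.rowLen_anti r i hge
      omega
    · intro hir
      exact rowLen_ge_of_addOK μ h hir
  apply colLen_eq
  intro i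
  rw [mem_grow μ h, YoungDiagram.mem_iff_lt_colLen, Prod.mk.injEq]
  by_cases hj : j = μ.rowLen r
  · subst hj
    rw [if_pos rfl, hcol]
    omega
  · rw [if_neg hj]
    omega

lemma colLen_corner {r : ℕ} (h : AddOK μ r) : μ.colLen (μ.rowLen r) = r := by
  apply colLen_eq
  intro i
  rw [YoungDiagram.mem_iff_lt_rowLen]
  constructor
  · intro hlt
    by_contra hge
    push_neg at hge
    have := μ.rowLen_anti r i hge
    omega
  · intro hir
    exact rowLen_ge_of_addOK μ h hir

/-- classification of covers -/
lemma cover_eq_grow {Λ : YoungDiagram} (hle : μ ≤ Λ) (hcard : Λ.card = μ.card + 1) :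
    ∃ r, AddOK μ r ∧ Λ = grow μ r := by
  have hsub : μ.cells ⊆ Λ.cells := hle
  have hcard' : (Λ.cells \ μ.cells).card = 1 := by
    rw [Finset.card_sdiff_of_subset hsub]
    show Λ.card - μ.card = 1
    omega
  obtain ⟨c, hc⟩ := Finset.card_eq_one.mp hcard'
  have hcells : Λ.cells = insert c μ.cells := by
    apply Finset.eq_of_subset_of_card_le
    · intro a ha
      by_cases h : a ∈ μ.cells
      · exact Finset.mem_insert_of_mem h
      · have : a ∈ Λ.cells \ μ.cells := Finset.mem_sdiff.mpr ⟨ha, h⟩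
        rw [hc, Finset.mem_singleton] at this
        rw [Finset.mem_insert]
        exact Or.inl this
    · rw [show Λ.cells.card = μ.card + 1 from hcard]
      exact le_trans (Finset.card_insert_le _ _) (by simp [YoungDiagram.card])
  obtain ⟨a, b⟩ := c
  have hcmem : (a, b) ∈ Λ := by
    rw [← YoungDiagram.mem_cells, hcells]; exact Finset.mem_insert_self _ _
  have hcnot : (a, b) ∉ μ := by
    have : (a,b) ∈ Λ.cells \ μ.cells := by rw [hc]; exact Finset.mem_singleton_self _
    exact fun hm => (Finset.mem_sdiff.mp this).2 hm
  have hmemΛ : ∀ d : ℕ × ℕ, d ∈ Λ ↔ d = (a, b) ∨ d ∈ μ := by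
    intro d
    rw [← YoungDiagram.mem_cells, hcells, Finset.mem_insert]
    rfl
  -- b = rowLen a
  have hbge : μ.rowLen a ≤ b := by
    by_contra hlt
    push_neg at hlt
    exact hcnot (YoungDiagram.mem_iff_lt_rowLen.mpr hlt)
  have hble : b ≤ μ.rowLen a := by
    by_contra hgt
    push_neg at hgt
    have h1 : (a, μ.rowLen a) ∈ Λ := Λ.up_left_mem le_rfl (le_of_lt hgt) hcmem
    rw [hmemΛ] at h1
    rcases h1 with h1 | h1
    · have := congrArg Prod.snd h1; simp at this; omega
    · exact absurd h1 (not_mem_corner μ a)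
  have hb : b = μ.rowLen a := le_antisymm hble hbge
  subst hb
  have haddok : AddOK μ a := by
    rcases Nat.eq_zero_or_pos a with rfl | hpos
    · exact Or.inl rfl
    · right
      have h1 : (a - 1, μ.rowLen a) ∈ Λ := Λ.up_left_mem (by omega) le_rfl hcmem
      rw [hmemΛ] at h1
      rcases h1 with h1 | h1
      · have := congrArg Prod.fst h1; simp at this; omega
      · rw [YoungDiagram.mem_iff_lt_rowLen] at h1
        exact h1
  refine ⟨a, haddok, ?_⟩
  apply YoungDiagram.ext
  rw [hcells, grow_cells μ haddok]

lemma grow_inj {r r' : ℕ} (h : AddOK μ r) (h' : AddOK μ r') (heq : grow μ r = grow μ r') :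
    r = r' := by
  by_contra hne
  have h1 : (r, μ.rowLen r) ∈ grow μ r := (mem_grow μ h).mpr (Or.inl rfl)
  rw [heq, mem_grow μ h'] at h1
  rcases h1 with h1 | h1
  · exact hne (congrArg Prod.fst h1)
  · exact not_mem_corner μ r h1



end QP3aux


namespace QP3aux2
open QP3aux

lemma hook_pos {μ : YoungDiagram} {c : ℕ × ℕ} (hc : c ∈ μ) : 1 ≤ hookLen μ c := by
  obtain ⟨i, j⟩ := c
  have h1 : j < μ.rowLen i := YoungDiagram.mem_iff_lt_rowLen.mp hc
  have h2 : i < μ.colLen j := YoungDiagram.mem_iff_lt_colLen.mp hc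
  unfold hookLen
  simp only
  omega

/-- `L = (number of rows) + 1` -/
def LL (μ : YoungDiagram) : ℕ := μ.colLen 0 + 1

/-- the beta-set / first-column hook lengths (with one trailing zero row) -/
def xx (μ : YoungDiagram) (j : ℕ) : ℕ := μ.rowLen j + (LL μ - 1 - j)

lemma rowLen_pos_iff {μ : YoungDiagram} {i : ℕ} : 0 < μ.rowLen i ↔ i < μ.colLen 0 := by
  have h1 : (i, 0) ∈ μ ↔ 0 < μ.rowLen i := YoungDiagram.mem_iff_lt_rowLen
  have h2 : (i, 0) ∈ μ ↔ i < μ.colLen 0 := YoungDiagram.mem_iff_lt_colLen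
  exact h1.symm.trans h2

lemma xx_dec (μ : YoungDiagram) {i j : ℕ} (hij : i < j) (hj : j < LL μ) : xx μ j < xx μ i := by
  have h1 := μ.rowLen_anti i j (le_of_lt hij)
  unfold xx LL at *
  omega

lemma xx_last (μ : YoungDiagram) : xx μ (LL μ - 1) = 0 := by
  have h0 : μ.rowLen (μ.colLen 0) = 0 := by
    have := rowLen_pos_iff (μ := μ) (i := μ.colLen 0)
    omega
  unfold xx LL
  simp [h0]

lemma addOK_lt {μ : YoungDiagram} {r : ℕ} (h : AddOK μ r) : r < LL μ := by
  unfold LL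
  rcases h with rfl | h
  · omega
  · have h1 : 0 < μ.rowLen (r - 1) := by omega
    have h2 := rowLen_pos_iff.mp h1
    rcases Nat.eq_zero_or_pos r with rfl | hpos
    · omega
    · omega

lemma xx_eq_of_not_addOK {μ : YoungDiagram} {r : ℕ} (hr : 0 < r) (hrL : r < LL μ)
    (h : ¬ AddOK μ r) : xx μ (r - 1) = xx μ r + 1 := by
  unfold AddOK at h
  push_neg at h
  have h1 := μ.rowLen_anti (r-1) r (by omega)
  have h2 : μ.rowLen r = μ.rowLen (r-1) := by omega
  unfold xx LL at *
  omega

/-- the multiset of hooks of row `r` together with the differences `xx r - xx i`, `i > r`,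
fill `[1, xx r]` -/
lemma hook_row_prod (μ : YoungDiagram) {r : ℕ} (h : AddOK μ r) (g : ℕ → ℝ) :
    (∏ j ∈ Finset.range (μ.rowLen r), g (hookLen μ (r, j))) *
      ∏ i ∈ Finset.Ico (r+1) (LL μ), g (xx μ r - xx μ i)
      = ∏ m ∈ Finset.Icc 1 (xx μ r), g m := by
  have hrL : r < LL μ := addOK_lt h
  have hcol0 : ∀ j, μ.colLen j ≤ μ.colLen 0 := fun j => μ.colLen_anti 0 j (Nat.zero_le j)
  have hmemrow : ∀ j, j < μ.rowLen r → r < μ.colLen j := by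
    intro j hj
    exact YoungDiagram.mem_iff_lt_colLen.mp (YoungDiagram.mem_iff_lt_rowLen.mpr hj)
  have hhook : ∀ j, hookLen μ (r, j) = μ.rowLen r + μ.colLen j - r - j - 1 := fun j => rfl
  have hinj1 : ∀ a ∈ Finset.range (μ.rowLen r), ∀ b ∈ Finset.range (μ.rowLen r),
      hookLen μ (r, a) = hookLen μ (r, b) → a = b := by
    intro a ha b hb hab
    rw [Finset.mem_range] at ha hb
    rw [hhook, hhook] at hab
    have h1 := hmemrow a ha
    have h2 := hmemrow b hb
    rcases Nat.lt_trichotomy a b with hlt | heq | hgt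
    · have := μ.colLen_anti a b (le_of_lt hlt); omega
    · exact heq
    · have := μ.colLen_anti b a (le_of_lt hgt); omega
  have hinj2 : ∀ a ∈ Finset.Ico (r+1) (LL μ), ∀ b ∈ Finset.Ico (r+1) (LL μ),
      xx μ r - xx μ a = xx μ r - xx μ b → a = b := by
    intro a ha b hb hab
    rw [Finset.mem_Ico] at ha hb
    have h1 := xx_dec μ (show r < a by omega) ha.2
    have h2 := xx_dec μ (show r < b by omega) hb.2
    rcases Nat.lt_trichotomy a b with hlt | heq | hgt
    · have := xx_dec μ hlt hb.2; omega
    · exact heq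
    · have := xx_dec μ hgt ha.2; omega
  have hsub1 : ∀ j, j < μ.rowLen r → hookLen μ (r, j) ∈ Finset.Icc 1 (xx μ r) := by
    intro j hj
    rw [Finset.mem_Icc, hhook]
    have h1 := hmemrow j hj
    have h2 := hcol0 j
    unfold xx LL at *
    omega
  have hsub2 : ∀ i, i ∈ Finset.Ico (r+1) (LL μ) → xx μ r - xx μ i ∈ Finset.Icc 1 (xx μ r) := by
    intro i hi
    rw [Finset.mem_Ico] at hi
    have h1 := xx_dec μ (show r < i by omega) hi.2
    rw [Finset.mem_Icc]
    omega
  have hdisj : Disjoint ((Finset.range (μ.rowLen r)).image (fun j => hookLen μ (r, j)))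
      ((Finset.Ico (r+1) (LL μ)).image (fun i => xx μ r - xx μ i)) := by
    rw [Finset.disjoint_left]
    intro m hm1 hm2
    rw [Finset.mem_image] at hm1 hm2
    obtain ⟨j, hj, hj2⟩ := hm1
    obtain ⟨i, hi, hi2⟩ := hm2
    rw [Finset.mem_range] at hj
    rw [Finset.mem_Ico] at hi
    have heq : hookLen μ (r, j) = xx μ r - xx μ i := by rw [hj2, hi2]
    rw [hhook] at heq
    have h1 := hmemrow j hj
    have h2 := hcol0 j
    have h3 := μ.rowLen_anti r i (by omega)
    have h4 := xx_dec μ (show r < i by omega) hi.2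
    have h5 : (i, j) ∈ μ ↔ j < μ.rowLen i := YoungDiagram.mem_iff_lt_rowLen
    have h6 : (i, j) ∈ μ ↔ i < μ.colLen j := YoungDiagram.mem_iff_lt_colLen
    have h7 : j < μ.rowLen i ↔ i < μ.colLen j := h5.symm.trans h6
    unfold xx LL at *
    omega
  have hunion : ((Finset.range (μ.rowLen r)).image (fun j => hookLen μ (r, j))) ∪
      ((Finset.Ico (r+1) (LL μ)).image (fun i => xx μ r - xx μ i)) = Finset.Icc 1 (xx μ r) := by
    apply Finset.eq_of_subset_of_card_le
    · intro m hm
      rw [Finset.mem_union, Finset.mem_image, Finset.mem_image] at hm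
      rcases hm with ⟨j, hj, rfl⟩ | ⟨i, hi, rfl⟩
      · exact hsub1 j (Finset.mem_range.mp hj)
      · exact hsub2 i hi
    · rw [Finset.card_union_of_disjoint hdisj,
        Finset.card_image_of_injOn hinj1, Finset.card_image_of_injOn hinj2]
      rw [Nat.card_Icc, Finset.card_range, Nat.card_Ico]
      unfold xx LL at *
      omega
  calc (∏ j ∈ Finset.range (μ.rowLen r), g (hookLen μ (r, j))) *
        ∏ i ∈ Finset.Ico (r+1) (LL μ), g (xx μ r - xx μ i)
      = (∏ m ∈ (Finset.range (μ.rowLen r)).image (fun j => hookLen μ (r, j)), g m) *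
        ∏ m ∈ (Finset.Ico (r+1) (LL μ)).image (fun i => xx μ r - xx μ i), g m := by
        rw [Finset.prod_image hinj1, Finset.prod_image hinj2]
    _ = ∏ m ∈ ((Finset.range (μ.rowLen r)).image (fun j => hookLen μ (r, j))) ∪
          ((Finset.Ico (r+1) (LL μ)).image (fun i => xx μ r - xx μ i)), g m :=
        (Finset.prod_union hdisj).symm
    _ = ∏ m ∈ Finset.Icc 1 (xx μ r), g m := by rw [hunion]

end QP3aux2

namespace QP3aux3
open QP3aux QP3aux2

lemma qpow_inj' {q : ℝ} (hq0 : 0 < q) (hq1 : q ≠ 1) {a b : ℕ} (h : q ^ a = q ^ b) : a = b := by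
  have hlog : Real.log q ≠ 0 := Real.log_ne_zero_of_pos_of_ne_one hq0 hq1
  have := congrArg Real.log h
  rw [Real.log_pow, Real.log_pow] at this
  exact_mod_cast mul_right_cancel₀ hlog this

variable {q : ℝ} (hq0 : 0 < q) (hq1 : q ≠ 1)

lemma hpowne' (hq0 : 0 < q) (hq1 : q ≠ 1) : ∀ a b : ℕ, a ≠ b → q ^ a - q ^ b ≠ 0 := by
  intro a b hab h
  exact hab (qpow_inj' hq0 hq1 (by linarith [sub_eq_zero.mp h]))

lemma qint_one (hq1 : q ≠ 1) : qint q 1 = 1 := by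
  rw [qint, pow_one, div_self (sub_ne_zero.mpr hq1)]

lemma qint_ne_zero (hq0 : 0 < q) (hq1 : q ≠ 1) {m : ℕ} (hm : m ≠ 0) : qint q m ≠ 0 := by
  apply div_ne_zero
  · simpa using hpowne' hq0 hq1 m 0 hm
  · exact sub_ne_zero.mpr hq1

lemma qint_div (hq1 : q ≠ 1) (a b : ℕ) : qint q a / qint q b = (q ^ a - 1) / (q ^ b - 1) := by
  rw [qint, qint, div_div_div_comm, div_self (sub_ne_zero.mpr hq1), div_one]

lemma tele (hq0 : 0 < q) (hq1 : q ≠ 1) (n : ℕ) :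
    ∏ m ∈ Finset.Icc 1 n, (qint q (m + 1) / qint q m) = qint q (n + 1) := by
  induction n with
  | zero => simp [qint_one hq1]
  | succ n ih =>
    rw [Finset.prod_Icc_succ_top (by omega), ih, mul_comm,
      div_mul_cancel₀ _ (qint_ne_zero hq0 hq1 (Nat.succ_ne_zero n))]

lemma qint_ratio1 (hq0 : 0 < q) (hq1 : q ≠ 1) {a b : ℕ} (hba : b < a) :
    qint q (a - b + 1) / qint q (a - b) = (q ^ (a + 1) - q ^ b) / (q ^ a - q ^ b) := by
  obtain ⟨k, rfl⟩ : ∃ k, a = b + k + 1 := ⟨a - b - 1, by omega⟩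
  have e0 : b + k + 1 - b = k + 1 := by omega
  rw [e0, qint_div hq1]
  have e1 : q ^ (b + k + 1 + 1) - q ^ b = q ^ b * (q ^ (k + 1 + 1) - 1) := by
    rw [mul_sub, ← pow_add, mul_one]
    congr 2 <;> omega
  have e2 : q ^ (b + k + 1) - q ^ b = q ^ b * (q ^ (k + 1) - 1) := by
    rw [mul_sub, ← pow_add, mul_one]
    congr 2 <;> omega
  rw [e1, e2, mul_div_mul_left _ _ (pow_ne_zero b (ne_of_gt hq0))]

lemma qint_ratio2 (hq0 : 0 < q) (hq1 : q ≠ 1) {a b : ℕ} (hba : b + 2 ≤ a) :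
    (qint q (a - b) / qint q (a - b - 1)) * ((q ^ (b + 1) - q ^ a) / (q ^ b - q ^ a)) = q := by
  obtain ⟨k, rfl⟩ : ∃ k, a = b + k + 2 := ⟨a - b - 2, by omega⟩
  have e0 : b + k + 2 - b = k + 2 := by omega
  have e0' : k + 2 - 1 = k + 1 := by omega
  rw [e0, e0', qint_div hq1]
  have h1 : q ^ (k + 1) - 1 ≠ 0 := by simpa using hpowne' hq0 hq1 (k+1) 0 (by omega)
  have h2 : q ^ b - q ^ (b + k + 2) ≠ 0 := hpowne' hq0 hq1 b (b + k + 2) (by omega)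
  have h3 : q ^ (b + 1) - q ^ (b + k + 2) ≠ 0 := hpowne' hq0 hq1 (b+1) (b + k + 2) (by omega)
  have e1 : q ^ (b + k + 2) = q ^ b * (q ^ k * q * q) := by
    have : q ^ (b + k + 2) = q ^ (b + k) * q ^ 2 := by rw [← pow_add]
    rw [this, pow_add]
    ring
  field_simp
  rw [e1]
  ring
end QP3aux3

namespace QP3aux4
open QP3aux QP3aux2 QP3aux3

lemma bstat_grow (μ : YoungDiagram) {r : ℕ} (h : AddOK μ r) :
    bstat (grow μ r) = bstat μ + r := by
  unfold bstat
  rw [grow_cells μ h, Finset.sum_insert (by rw [YoungDiagram.mem_cells]; exact not_mem_corner μ r)]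
  simp [add_comm]

lemma qTrans_formula (q : ℝ) (hq0 : 0 < q) (hq1 : q ≠ 1) (μ : YoungDiagram) {r : ℕ}
    (h : AddOK μ r) :
    qTransition q μ (grow μ r)
      = (q - 1) / (q ^ (xx μ r + 1) - 1) *
        ∏ j ∈ (Finset.range (LL μ)).erase r,
          (q ^ (xx μ r + 1) - q ^ (xx μ j)) / (q ^ (xx μ r) - q ^ (xx μ j)) := by
  have hq0' : q ≠ 0 := ne_of_gt hq0
  have hrL : r < LL μ := addOK_lt h
  have hcols : μ.colLen (μ.rowLen r) = r := colLen_corner μ h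
  have hmemrow : ∀ j, j < μ.rowLen r → (r, j) ∈ μ := fun j hj =>
    YoungDiagram.mem_iff_lt_rowLen.mpr hj
  have hmemcol : ∀ i, i < r → (i, μ.rowLen r) ∈ μ := by
    intro i hi
    rw [YoungDiagram.mem_iff_lt_rowLen]
    exact rowLen_ge_of_addOK μ h hi
  -- hook length changes
  have hnew : hookLen (grow μ r) (r, μ.rowLen r) = 1 := by
    unfold hookLen
    simp only
    rw [rowLen_grow μ h, colLen_grow μ h, if_pos rfl, if_pos rfl, hcols]
    omega
  have hrow : ∀ j, j < μ.rowLen r →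
      hookLen (grow μ r) (r, j) = hookLen μ (r, j) + 1 := by
    intro j hj
    have hc := YoungDiagram.mem_iff_lt_colLen.mp (hmemrow j hj)
    have he : hookLen μ (r, j) = μ.rowLen r + μ.colLen j - r - j - 1 := rfl
    unfold hookLen
    simp only
    rw [rowLen_grow μ h, colLen_grow μ h, if_pos rfl, if_neg (by omega)]
    omega
  have hcol : ∀ i, i < r →
      hookLen (grow μ r) (i, μ.rowLen r) = hookLen μ (i, μ.rowLen r) + 1 := by
    intro i hi
    have hri := rowLen_ge_of_addOK μ h hi
    have he : hookLen μ (i, μ.rowLen r) = μ.rowLen i + μ.colLen (μ.rowLen r) - i - μ.rowLen r - 1 := rfl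
    rw [hcols] at he
    unfold hookLen
    simp only
    rw [rowLen_grow μ h, colLen_grow μ h, if_neg (by omega), if_pos rfl, hcols]
    omega
  have hother : ∀ c : ℕ × ℕ, c.1 ≠ r → c.2 ≠ μ.rowLen r →
      hookLen (grow μ r) c = hookLen μ c := by
    intro c h1 h2
    unfold hookLen
    rw [rowLen_grow μ h, colLen_grow μ h, if_neg h1, if_neg h2]
  have hGne : ∀ c ∈ μ.cells, qint q (hookLen μ c) ≠ 0 := by
    intro c hc
    have h1 := hook_pos ((YoungDiagram.mem_cells c).mp hc)
    exact qint_ne_zero hq0 hq1 (by omega)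
  -- the product over the grown diagram
  have hprodsplit :
      ∏ c ∈ (grow μ r).cells, qint q (hookLen (grow μ r) c)
        = (∏ c ∈ μ.cells, qint q (hookLen μ c)) *
          ((∏ j ∈ Finset.range (μ.rowLen r),
              (qint q (hookLen μ (r, j) + 1) / qint q (hookLen μ (r, j)))) *
           (∏ i ∈ Finset.range r,
              (qint q (hookLen μ (i, μ.rowLen r) + 1) / qint q (hookLen μ (i, μ.rowLen r))))) := by
    rw [grow_cells μ h,
      Finset.prod_insert (by rw [YoungDiagram.mem_cells]; exact not_mem_corner μ r)]
    rw [hnew, qint_one hq1, one_mul]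
    have hsplit1 : ∀ c ∈ μ.cells, qint q (hookLen (grow μ r) c)
        = qint q (hookLen μ c) * (qint q (hookLen (grow μ r) c) / qint q (hookLen μ c)) := by
      intro c hc
      rw [mul_comm, div_mul_cancel₀ _ (hGne c hc)]
    rw [Finset.prod_congr rfl hsplit1, Finset.prod_mul_distrib]
    congr 1
    have hfilter : ∏ c ∈ μ.cells, (qint q (hookLen (grow μ r) c) / qint q (hookLen μ c))
        = ∏ c ∈ μ.cells.filter (fun c => c.1 = r ∨ c.2 = μ.rowLen r),
            (qint q (hookLen (grow μ r) c) / qint q (hookLen μ c)) := by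
      symm
      apply Finset.prod_subset (Finset.filter_subset _ _)
      intro c hc hcn
      rw [Finset.mem_filter] at hcn
      push_neg at hcn
      obtain ⟨h1, h2⟩ := hcn hc
      rw [hother c h1 h2, div_self (hGne c hc)]
    have hBeq : μ.cells.filter (fun c => c.1 = r ∨ c.2 = μ.rowLen r)
        = ((Finset.range (μ.rowLen r)).image (fun j => (r, j))) ∪
          ((Finset.range r).image (fun i => (i, μ.rowLen r))) := by
      ext c
      obtain ⟨a, b⟩ := c
      simp only [Finset.mem_filter, Finset.mem_union, Finset.mem_image, Finset.mem_range,
        Prod.mk.injEq, YoungDiagram.mem_cells]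
      constructor
      · rintro ⟨hmem, rfl | rfl⟩
        · exact Or.inl ⟨b, YoungDiagram.mem_iff_lt_rowLen.mp hmem, rfl, rfl⟩
        · right
          refine ⟨a, ?_, rfl, rfl⟩
          have h2 := YoungDiagram.mem_iff_lt_colLen.mp hmem
          omega
      · rintro (⟨j, hj, rfl, rfl⟩ | ⟨i, hi, rfl, rfl⟩)
        · exact ⟨hmemrow j hj, Or.inl rfl⟩
        · exact ⟨hmemcol i hi, Or.inr rfl⟩
    have hdisjB : Disjoint ((Finset.range (μ.rowLen r)).image (fun j => (r, j)))
        ((Finset.range r).image (fun i => (i, μ.rowLen r))) := by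
      rw [Finset.disjoint_left]
      rintro c hc1 hc2
      rw [Finset.mem_image] at hc1 hc2
      obtain ⟨j, hj, rfl⟩ := hc1
      obtain ⟨i, hi, hie⟩ := hc2
      rw [Finset.mem_range] at hj hi
      have h1 := congrArg Prod.snd hie
      simp only at h1
      omega
    have hinjrow : ∀ a ∈ Finset.range (μ.rowLen r), ∀ b ∈ Finset.range (μ.rowLen r),
        (r, a) = (r, b) → a = b := by
      intro a _ b _ hab
      simpa using congrArg Prod.snd hab
    have hinjcol : ∀ a ∈ Finset.range r, ∀ b ∈ Finset.range r,
        (a, μ.rowLen r) = (b, μ.rowLen r) → a = b := by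
      intro a _ b _ hab
      simpa using congrArg Prod.fst hab
    rw [hfilter, hBeq, Finset.prod_union hdisjB, Finset.prod_image hinjrow,
      Finset.prod_image hinjcol]
    congr 1
    · exact Finset.prod_congr rfl (fun j hj => by rw [hrow j (Finset.mem_range.mp hj)])
    · exact Finset.prod_congr rfl (fun i hi => by rw [hcol i (Finset.mem_range.mp hi)])
  -- row product evaluation
  have hEqRow : (∏ j ∈ Finset.range (μ.rowLen r),
      (qint q (hookLen μ (r, j) + 1) / qint q (hookLen μ (r, j)))) *
      ∏ i ∈ Finset.Ico (r+1) (LL μ),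
        ((q ^ (xx μ r + 1) - q ^ (xx μ i)) / (q ^ (xx μ r) - q ^ (xx μ i)))
      = qint q (xx μ r + 1) := by
    have h1 := hook_row_prod μ h (fun m => qint q (m + 1) / qint q m)
    rw [tele hq0 hq1] at h1
    have h2 : ∏ i ∈ Finset.Ico (r+1) (LL μ),
        ((q ^ (xx μ r + 1) - q ^ (xx μ i)) / (q ^ (xx μ r) - q ^ (xx μ i)))
        = ∏ i ∈ Finset.Ico (r+1) (LL μ),
          (qint q (xx μ r - xx μ i + 1) / qint q (xx μ r - xx μ i)) := by
      refine Finset.prod_congr rfl ?_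
      intro i hi
      rw [Finset.mem_Ico] at hi
      exact (qint_ratio1 hq0 hq1 (xx_dec μ (by omega) hi.2)).symm
    rw [h2]
    exact h1
  -- column product evaluation
  have hcolhook : ∀ i, i < r → hookLen μ (i, μ.rowLen r) + 1 = xx μ i - xx μ r
      ∧ xx μ r + 2 ≤ xx μ i ∧ hookLen μ (i, μ.rowLen r) = xx μ i - xx μ r - 1 := by
    intro i hi
    have h1 := rowLen_ge_of_addOK μ h hi
    have h2 : hookLen μ (i, μ.rowLen r)
        = μ.rowLen i + μ.colLen (μ.rowLen r) - i - μ.rowLen r - 1 := rfl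
    rw [hcols] at h2
    unfold xx LL at *
    omega
  have hEqCol : (∏ i ∈ Finset.range r,
      (qint q (hookLen μ (i, μ.rowLen r) + 1) / qint q (hookLen μ (i, μ.rowLen r)))) *
      ∏ i ∈ Finset.range r,
        ((q ^ (xx μ r + 1) - q ^ (xx μ i)) / (q ^ (xx μ r) - q ^ (xx μ i)))
      = q ^ r := by
    rw [← Finset.prod_mul_distrib]
    have hterm : ∀ i ∈ Finset.range r,
        (qint q (hookLen μ (i, μ.rowLen r) + 1) / qint q (hookLen μ (i, μ.rowLen r))) *
          ((q ^ (xx μ r + 1) - q ^ (xx μ i)) / (q ^ (xx μ r) - q ^ (xx μ i))) = q := by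
      intro i hi
      rw [Finset.mem_range] at hi
      obtain ⟨e1, e2, e3⟩ := hcolhook i hi
      rw [e1, e3]
      exact qint_ratio2 hq0 hq1 e2
    rw [Finset.prod_congr rfl hterm, Finset.prod_const, Finset.card_range]
  -- split the erased range
  have hsplitE : (Finset.range (LL μ)).erase r = Finset.range r ∪ Finset.Ico (r+1) (LL μ) := by
    ext a
    simp only [Finset.mem_erase, Finset.mem_range, Finset.mem_union, Finset.mem_Ico]
    omega
  have hdisjE : Disjoint (Finset.range r) (Finset.Ico (r+1) (LL μ)) := by
    rw [Finset.disjoint_left]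
    intro a ha hb
    rw [Finset.mem_range] at ha
    rw [Finset.mem_Ico] at hb
    omega
  -- nonvanishing
  have hPne : (∏ c ∈ μ.cells, qint q (hookLen μ c)) ≠ 0 := Finset.prod_ne_zero_iff.mpr hGne
  have hRrowne : (∏ j ∈ Finset.range (μ.rowLen r),
      (qint q (hookLen μ (r, j) + 1) / qint q (hookLen μ (r, j)))) ≠ 0 := by
    apply Finset.prod_ne_zero_iff.mpr
    intro j hj
    have h1 := hook_pos (hmemrow j (Finset.mem_range.mp hj))
    exact div_ne_zero (qint_ne_zero hq0 hq1 (by omega)) (qint_ne_zero hq0 hq1 (by omega))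
  have hRcolne : (∏ i ∈ Finset.range r,
      (qint q (hookLen μ (i, μ.rowLen r) + 1) / qint q (hookLen μ (i, μ.rowLen r)))) ≠ 0 := by
    apply Finset.prod_ne_zero_iff.mpr
    intro i hi
    have h1 := hook_pos (hmemcol i (Finset.mem_range.mp hi))
    exact div_ne_zero (qint_ne_zero hq0 hq1 (by omega)) (qint_ne_zero hq0 hq1 (by omega))
  have hAne : q ^ (xx μ r + 1) - 1 ≠ 0 := by
    simpa using hpowne' hq0 hq1 (xx μ r + 1) 0 (by omega)
  -- the key identity
  have hkey : (q - 1) / (q ^ (xx μ r + 1) - 1) *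
      (∏ j ∈ (Finset.range (LL μ)).erase r,
        ((q ^ (xx μ r + 1) - q ^ (xx μ j)) / (q ^ (xx μ r) - q ^ (xx μ j)))) *
      ((∏ j ∈ Finset.range (μ.rowLen r),
          (qint q (hookLen μ (r, j) + 1) / qint q (hookLen μ (r, j)))) *
       (∏ i ∈ Finset.range r,
          (qint q (hookLen μ (i, μ.rowLen r) + 1) / qint q (hookLen μ (i, μ.rowLen r)))))
      = q ^ r := by
    rw [hsplitE, Finset.prod_union hdisjE]
    have hone : (q - 1) / (q ^ (xx μ r + 1) - 1) * qint q (xx μ r + 1) = 1 := by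
      rw [qint, div_mul_div_comm, mul_comm]
      exact div_self (mul_ne_zero hAne (sub_ne_zero.mpr hq1))
    calc (q - 1) / (q ^ (xx μ r + 1) - 1) *
        ((∏ j ∈ Finset.range r, ((q ^ (xx μ r + 1) - q ^ (xx μ j)) / (q ^ (xx μ r) - q ^ (xx μ j)))) *
         (∏ j ∈ Finset.Ico (r+1) (LL μ), ((q ^ (xx μ r + 1) - q ^ (xx μ j)) / (q ^ (xx μ r) - q ^ (xx μ j))))) *
        ((∏ j ∈ Finset.range (μ.rowLen r),
            (qint q (hookLen μ (r, j) + 1) / qint q (hookLen μ (r, j)))) *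
         (∏ i ∈ Finset.range r,
            (qint q (hookLen μ (i, μ.rowLen r) + 1) / qint q (hookLen μ (i, μ.rowLen r)))))
        = (q - 1) / (q ^ (xx μ r + 1) - 1) *
          ((∏ j ∈ Finset.range (μ.rowLen r),
              (qint q (hookLen μ (r, j) + 1) / qint q (hookLen μ (r, j)))) *
           (∏ j ∈ Finset.Ico (r+1) (LL μ), ((q ^ (xx μ r + 1) - q ^ (xx μ j)) / (q ^ (xx μ r) - q ^ (xx μ j))))) *
          ((∏ i ∈ Finset.range r,
              (qint q (hookLen μ (i, μ.rowLen r) + 1) / qint q (hookLen μ (i, μ.rowLen r)))) *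
           (∏ j ∈ Finset.range r, ((q ^ (xx μ r + 1) - q ^ (xx μ j)) / (q ^ (xx μ r) - q ^ (xx μ j))))) := by
            ring
      _ = (q - 1) / (q ^ (xx μ r + 1) - 1) * qint q (xx μ r + 1) * q ^ r := by
            rw [hEqRow, hEqCol]
      _ = q ^ r := by rw [hone, one_mul]
  -- conclude
  have hb : ((bstat (grow μ r) : ℤ) - (bstat μ : ℤ)) = (r : ℤ) := by
    rw [bstat_grow μ h]
    push_cast
    ring
  rw [qTransition, hb, zpow_natCast, hprodsplit]
  rw [show q ^ r * (∏ c ∈ μ.cells, qint q (hookLen μ c)) = (∏ c ∈ μ.cells, qint q (hookLen μ c)) * q ^ r from mul_comm _ _]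
  rw [mul_div_mul_left _ _ hPne]
  rw [div_eq_iff (mul_ne_zero hRrowne hRcolne)]
  exact hkey.symm

end QP3aux4

/-- For every positive real `q ≠ 1`, every `n ≥ 1` and every Young diagram `λ` of size `n`,
the transition probabilities of the `q`-Plancherel growth process sum to `1` over all
Young diagrams `Λ` obtained from `λ` by adding one box. -/
theorem stmt_3 (q : ℝ) (hq0 : 0 < q) (hq1 : q ≠ 1) (n : ℕ) (hn : 0 < n)
    (μ : YoungDiagram) (hμ : μ.card = n) :
    ∑' Λ : {Λ : YoungDiagram // μ ≤ Λ ∧ Λ.card = μ.card + 1},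
      qTransition q μ (Λ : YoungDiagram) = 1 := by
  classical
  set A : Finset ℕ := (Finset.range (QP3aux2.LL μ)).filter (fun r => QP3aux.AddOK μ r) with hA
  have hmemA : ∀ p : {r : ℕ // r ∈ A}, QP3aux.AddOK μ p.1 :=
    fun p => (Finset.mem_filter.mp p.2).2
  let e : {r : ℕ // r ∈ A} → {Λ : YoungDiagram // μ ≤ Λ ∧ Λ.card = μ.card + 1} :=
    fun p => ⟨QP3aux.grow μ p.1, QP3aux.le_grow μ (hmemA p), QP3aux.card_grow μ (hmemA p)⟩
  have hbij : Function.Bijective e := by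
    constructor
    · intro p p' hpp
      have h1 : QP3aux.grow μ p.1 = QP3aux.grow μ p'.1 := congrArg Subtype.val hpp
      exact Subtype.ext (QP3aux.grow_inj μ (hmemA p) (hmemA p') h1)
    · rintro ⟨Λ, hle, hcard⟩
      obtain ⟨r, hOK, rfl⟩ := QP3aux.cover_eq_grow μ hle hcard
      refine ⟨⟨r, ?_⟩, rfl⟩
      rw [hA, Finset.mem_filter, Finset.mem_range]
      exact ⟨QP3aux2.addOK_lt hOK, hOK⟩
  have step1 : ∑' Λ : {Λ : YoungDiagram // μ ≤ Λ ∧ Λ.card = μ.card + 1},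
      qTransition q μ (Λ : YoungDiagram) = ∑ r ∈ A, qTransition q μ (QP3aux.grow μ r) := by
    rw [← (Equiv.ofBijective e hbij).tsum_eq
      (fun Λ : {Λ : YoungDiagram // μ ≤ Λ ∧ Λ.card = μ.card + 1} =>
        qTransition q μ (Λ : YoungDiagram))]
    exact Finset.tsum_subtype A (fun r => qTransition q μ (QP3aux.grow μ r))
  rw [step1]
  have step2 : ∀ r ∈ A, qTransition q μ (QP3aux.grow μ r)
      = (q - 1) / (q ^ (QP3aux2.xx μ r + 1) - 1) *
        ∏ j ∈ (Finset.range (QP3aux2.LL μ)).erase r,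
          (q ^ (QP3aux2.xx μ r + 1) - q ^ (QP3aux2.xx μ j)) /
            (q ^ (QP3aux2.xx μ r) - q ^ (QP3aux2.xx μ j)) := by
    intro r hr
    rw [hA, Finset.mem_filter] at hr
    exact QP3aux4.qTrans_formula q hq0 hq1 μ hr.2
  rw [Finset.sum_congr rfl step2]
  have step3 : ∑ r ∈ A, ((q - 1) / (q ^ (QP3aux2.xx μ r + 1) - 1) *
        ∏ j ∈ (Finset.range (QP3aux2.LL μ)).erase r,
          (q ^ (QP3aux2.xx μ r + 1) - q ^ (QP3aux2.xx μ j)) /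
            (q ^ (QP3aux2.xx μ r) - q ^ (QP3aux2.xx μ j)))
      = ∑ r ∈ Finset.range (QP3aux2.LL μ), ((q - 1) / (q ^ (QP3aux2.xx μ r + 1) - 1) *
        ∏ j ∈ (Finset.range (QP3aux2.LL μ)).erase r,
          (q ^ (QP3aux2.xx μ r + 1) - q ^ (QP3aux2.xx μ j)) /
            (q ^ (QP3aux2.xx μ r) - q ^ (QP3aux2.xx μ j))) := by
    rw [hA]
    apply Finset.sum_subset (Finset.filter_subset _ _)
    intro r hrange hnA
    have hrL : r < QP3aux2.LL μ := Finset.mem_range.mp hrange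
    have hnadd : ¬ QP3aux.AddOK μ r := fun hOK => hnA (Finset.mem_filter.mpr ⟨hrange, hOK⟩)
    have hr0 : 0 < r := by
      rcases Nat.eq_zero_or_pos r with rfl | hr0
      · exact absurd (Or.inl rfl) hnadd
      · exact hr0
    have hxm : QP3aux2.xx μ (r-1) = QP3aux2.xx μ r + 1 :=
      QP3aux2.xx_eq_of_not_addOK hr0 hrL hnadd
    apply mul_eq_zero_of_right
    apply Finset.prod_eq_zero (i := r - 1)
    · rw [Finset.mem_erase, Finset.mem_range]
      omega
    · rw [hxm, sub_self, zero_div]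
  rw [step3]
  exact alg_identity q hq0 hq1 (QP3aux2.LL μ) (by unfold QP3aux2.LL; omega) (QP3aux2.xx μ)
    (fun i j hij hj => QP3aux2.xx_dec μ hij hj) (QP3aux2.xx_last μ)
end

section
/- The q-Plancherel measure satisfies M_{n,q^{-1}}(λ') = M_{n,q}(λ) for every partition λ of n, where λ' is the conjugate partition. -/
open scoped BigOperators

/-- The number of standard Young tableaux of shape `μ`. -/
noncomputable def dimSYT (μ : YoungDiagram) : ℕ :=
  Nat.card {T : μ.cells ≃ Fin μ.card //
    ∀ c d : μ.cells, (c : ℕ × ℕ).1 ≤ (d : ℕ × ℕ).1 → (c : ℕ × ℕ).2 ≤ (d : ℕ × ℕ).2 →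
      c ≠ d → (T c : ℕ) < (T d : ℕ)}

/-- The `q`-Plancherel measure `M_{n,q}(λ) = q^{b(λ)} (dim λ) / ∏_{□∈λ} {h(□)}_q`. -/
noncomputable def qPlancherel (q : ℝ) (μ : YoungDiagram) : ℝ :=
  q ^ bstat μ * (dimSYT μ : ℝ) / ∏ c ∈ μ.cells, qint q (hookLen μ c)

section aux

open Finset

lemma prod_transpose_cells {M : Type*} [CommMonoid M] (μ : YoungDiagram) (f : ℕ × ℕ → M) :
    ∏ c ∈ μ.transpose.cells, f c = ∏ c ∈ μ.cells, f c.swap := by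
  refine prod_nbij' Prod.swap Prod.swap ?_ ?_ ?_ ?_ ?_ <;>
    simp [YoungDiagram.mem_cells, YoungDiagram.mem_transpose]

lemma sum_transpose_cells {M : Type*} [AddCommMonoid M] (μ : YoungDiagram) (f : ℕ × ℕ → M) :
    ∑ c ∈ μ.transpose.cells, f c = ∑ c ∈ μ.cells, f c.swap := by
  refine sum_nbij' Prod.swap Prod.swap ?_ ?_ ?_ ?_ ?_ <;>
    simp [YoungDiagram.mem_cells, YoungDiagram.mem_transpose]

lemma card_transpose (μ : YoungDiagram) : μ.transpose.card = μ.card := by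
  simpa using sum_transpose_cells μ (fun _ => (1 : ℕ))

lemma hookLen_transpose (μ : YoungDiagram) (c : ℕ × ℕ) :
    hookLen μ.transpose c.swap = hookLen μ c := by
  simp only [hookLen, Prod.fst_swap, Prod.snd_swap, YoungDiagram.rowLen_transpose,
    YoungDiagram.colLen_transpose]
  omega

lemma dimSYT_transpose (μ : YoungDiagram) : dimSYT μ.transpose = dimSYT μ := by
  have hcard : μ.transpose.card = μ.card := card_transpose μ
  let E : {c : ℕ × ℕ // c ∈ μ.cells} ≃ {c : ℕ × ℕ // c ∈ μ.transpose.cells} :=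
    { toFun := fun c => ⟨c.1.swap, by
        rw [YoungDiagram.mem_cells, YoungDiagram.mem_transpose, Prod.swap_swap]
        exact (YoungDiagram.mem_cells _).1 c.2⟩
      invFun := fun c => ⟨c.1.swap, by
        have := (YoungDiagram.mem_cells _).1 c.2
        rw [YoungDiagram.mem_transpose] at this
        exact (YoungDiagram.mem_cells _).2 this⟩
      left_inv := fun c => by simp
      right_inv := fun c => by simp }
  have hE : ∀ c : {c : ℕ × ℕ // c ∈ μ.cells}, (E c : ℕ × ℕ) = (c : ℕ × ℕ).swap :=
    fun c => rfl
  refine Nat.card_congr ?_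
  refine { toFun := fun T => ⟨(E.trans T.1).trans (finCongr hcard), ?_⟩
           invFun := fun T => ⟨(E.symm.trans T.1).trans (finCongr hcard.symm), ?_⟩
           left_inv := fun T => by ext c; simp
           right_inv := fun T => by ext c; simp }
  · intro c d h1 h2 hne
    have h1' : (E c : ℕ × ℕ).1 ≤ (E d : ℕ × ℕ).1 := by rw [hE, hE]; simpa using h2
    have h2' : (E c : ℕ × ℕ).2 ≤ (E d : ℕ × ℕ).2 := by rw [hE, hE]; simpa using h1
    have hne' : E c ≠ E d := fun h => hne (E.injective h)
    simpa using T.2 _ _ h1' h2' hne'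
  · intro c d h1 h2 hne
    have hE' : ∀ x, ((E.symm x : ℕ × ℕ)) = ((x : ℕ × ℕ)).swap := by
      intro x
      have := hE (E.symm x)
      rw [Equiv.apply_symm_apply] at this
      rw [this, Prod.swap_swap]
    have h1' : (E.symm c : ℕ × ℕ).1 ≤ (E.symm d : ℕ × ℕ).1 := by
      rw [hE', hE']; simpa using h2
    have h2' : (E.symm c : ℕ × ℕ).2 ≤ (E.symm d : ℕ × ℕ).2 := by
      rw [hE', hE']; simpa using h1
    have hne' : E.symm c ≠ E.symm d := fun h => hne (E.symm.injective h)
    simpa using T.2 _ _ h1' h2' hne'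

lemma sum_leg (μ : YoungDiagram) :
    ∑ c ∈ μ.cells, (μ.colLen c.2 - c.1 - 1) = ∑ c ∈ μ.cells, c.1 := by
  refine Finset.sum_nbij' (fun c => (μ.colLen c.2 - 1 - c.1, c.2))
    (fun c => (μ.colLen c.2 - 1 - c.1, c.2)) ?_ ?_ ?_ ?_ ?_
  · rintro ⟨i, j⟩ hc
    rw [YoungDiagram.mem_cells, YoungDiagram.mem_iff_lt_colLen] at hc
    rw [YoungDiagram.mem_cells, YoungDiagram.mem_iff_lt_colLen]
    simp only
    omega
  · rintro ⟨i, j⟩ hc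
    rw [YoungDiagram.mem_cells, YoungDiagram.mem_iff_lt_colLen] at hc
    rw [YoungDiagram.mem_cells, YoungDiagram.mem_iff_lt_colLen]
    simp only
    omega
  · rintro ⟨i, j⟩ hc
    rw [YoungDiagram.mem_cells, YoungDiagram.mem_iff_lt_colLen] at hc
    dsimp only
    simp only [Prod.mk.injEq, and_true]
    omega
  · rintro ⟨i, j⟩ hc
    rw [YoungDiagram.mem_cells, YoungDiagram.mem_iff_lt_colLen] at hc
    dsimp only
    simp only [Prod.mk.injEq, and_true]
    omega
  · rintro ⟨i, j⟩ hc
    rw [YoungDiagram.mem_cells, YoungDiagram.mem_iff_lt_colLen] at hc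
    dsimp only
    omega

lemma sum_arm (μ : YoungDiagram) :
    ∑ c ∈ μ.cells, (μ.rowLen c.1 - c.2 - 1) = ∑ c ∈ μ.cells, c.2 := by
  have := sum_leg μ.transpose
  rw [sum_transpose_cells, sum_transpose_cells] at this
  simpa [YoungDiagram.colLen_transpose] using this

lemma sum_hookLen (μ : YoungDiagram) :
    ∑ c ∈ μ.cells, hookLen μ c = μ.card + bstat μ + ∑ c ∈ μ.cells, c.2 := by
  have h1 : ∑ c ∈ μ.cells, hookLen μ c =
      ∑ c ∈ μ.cells, ((μ.colLen c.2 - c.1 - 1) + (μ.rowLen c.1 - c.2 - 1) + 1) := by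
    refine Finset.sum_congr rfl fun c hc => ?_
    rw [YoungDiagram.mem_cells] at hc
    have h2 : c.1 < μ.colLen c.2 := YoungDiagram.mem_iff_lt_colLen.1 hc
    have h3 : c.2 < μ.rowLen c.1 := YoungDiagram.mem_iff_lt_rowLen.1 hc
    simp only [hookLen]; omega
  rw [h1, Finset.sum_add_distrib, Finset.sum_add_distrib, sum_leg, sum_arm, bstat]
  simp only [Finset.sum_const, smul_eq_mul, mul_one, YoungDiagram.card]
  omega

lemma qint_inv (q : ℝ) (hq0 : q ≠ 0) (hq1 : q ≠ 1) (m : ℕ) :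
    qint q⁻¹ m = q * (q ^ m)⁻¹ * qint q m := by
  have h1 : q - 1 ≠ 0 := sub_ne_zero.2 hq1
  have h2 : q⁻¹ - 1 ≠ 0 := sub_ne_zero.2 (by simpa [inv_eq_one] using hq1)
  have h3 : q ^ m ≠ 0 := pow_ne_zero _ hq0
  have e1 : q⁻¹ - 1 = -(q - 1) * q⁻¹ := by field_simp; ring
  have e2 : q⁻¹ ^ m - 1 = -(q ^ m - 1) * (q ^ m)⁻¹ := by rw [inv_pow]; field_simp; ring
  rw [qint, qint, e1, e2, mul_div_mul_comm, neg_div_neg_eq, div_inv_eq_mul]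
  ring

end aux

/-- The `q`-Plancherel measure satisfies `M_{n,q⁻¹}(λ') = M_{n,q}(λ)`, where `λ'` is the
conjugate (transposed) partition. -/
theorem stmt_5 (q : ℝ) (hq0 : 0 < q) (hq1 : q ≠ 1) (n : ℕ)
    (μ : YoungDiagram) (hμ : μ.card = n) :
    qPlancherel q⁻¹ μ.transpose = qPlancherel q μ := by
  have hq : q ≠ 0 := ne_of_gt hq0
  have hb : bstat μ.transpose = ∑ c ∈ μ.cells, c.2 := by
    rw [bstat, sum_transpose_cells]; rfl
  have hprod : ∏ c ∈ μ.transpose.cells, qint q⁻¹ (hookLen μ.transpose c) =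
      q ^ μ.card * (q ^ (∑ c ∈ μ.cells, hookLen μ c))⁻¹ *
        ∏ c ∈ μ.cells, qint q (hookLen μ c) := by
    rw [prod_transpose_cells]
    have : ∀ c ∈ μ.cells, qint q⁻¹ (hookLen μ.transpose c.swap) =
        q * (q ^ hookLen μ c)⁻¹ * qint q (hookLen μ c) := by
      intro c _; rw [hookLen_transpose, qint_inv q hq hq1]
    rw [Finset.prod_congr rfl this, Finset.prod_mul_distrib, Finset.prod_mul_distrib,
      Finset.prod_const, Finset.prod_inv_distrib, Finset.prod_pow_eq_pow_sum]
  rw [qPlancherel, qPlancherel, hb, hprod, dimSYT_transpose, sum_hookLen]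
  set B := bstat μ
  set B' := ∑ c ∈ μ.cells, c.2
  set D := (dimSYT μ : ℝ)
  set P := ∏ c ∈ μ.cells, qint q (hookLen μ c)
  rcases eq_or_ne P 0 with hP | hP
  · simp [hP]
  · have h3 : (q : ℝ) ^ μ.card ≠ 0 := pow_ne_zero _ hq
    field_simp
    have h4 : q ^ B' * q⁻¹ ^ B' = 1 := by rw [← mul_pow, mul_inv_cancel₀ hq, one_pow]
    linear_combination (q ^ μ.card * q ^ B * D) * h4
end

section
/- For every positive integer n, the sum over all permutations σ in the symmetric group S_n of q^{maj(σ)} equals the q-factorial {n!}_q = ∏_{m=1}^n (q^m - 1)/(q - 1), where maj(σ) is the major index, i.e. the sum of all i ∈ {1,...,n-1} with σ(i) > σ(i+1). -/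
open Finset Equiv

namespace Stmt6

variable {n : ℕ}

/-- Summand of the major index at (natural) position `j`. -/
def df (τ : Equiv.Perm (Fin n)) (j : ℕ) : ℕ :=
  if h : j + 1 < n then
    (if τ ⟨j + 1, h⟩ < τ ⟨j, Nat.lt_of_succ_lt h⟩ then j + 1 else 0) else 0

/-- Descent predicate. -/
def dp (τ : Equiv.Perm (Fin n)) (j : ℕ) : Prop := df τ j ≠ 0

instance (τ : Equiv.Perm (Fin n)) : DecidablePred (dp τ) := fun _ => by
  unfold dp; infer_instance

lemma df_eq (τ : Equiv.Perm (Fin n)) (j : ℕ) :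
    df τ j = if dp τ j then j + 1 else 0 := by
  unfold dp df; split_ifs with h h' h'' <;> simp_all

lemma dp_lt (τ : Equiv.Perm (Fin n)) {j : ℕ} (h : dp τ j) : j + 1 < n := by
  unfold dp df at h; by_contra hc; simp [hc] at h

/-- Major index. -/
def maj (τ : Equiv.Perm (Fin n)) : ℕ := ∑ j ∈ range n, df τ j

/-- Insertion of the largest value at position `p`. -/
def ins (p : Fin (n + 1)) (τ : Equiv.Perm (Fin n)) : Equiv.Perm (Fin (n + 1)) :=
  (finSuccEquiv' p).trans ((τ.optionCongr).trans finSuccEquivLast.symm)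

lemma ins_apply_self (p : Fin (n + 1)) (τ : Equiv.Perm (Fin n)) :
    ins p τ p = Fin.last n := by
  simp [ins]

lemma ins_apply_succAbove (p : Fin (n + 1)) (τ : Equiv.Perm (Fin n)) (j : Fin n) :
    ins p τ (p.succAbove j) = (τ j).castSucc := by
  simp [ins]

lemma ins_apply_lt (p : Fin (n + 1)) (τ : Equiv.Perm (Fin n)) {i : ℕ} (hi : i < n)
    (h : i < (p : ℕ)) :
    ins p τ ⟨i, Nat.lt_succ_of_lt hi⟩ = (τ ⟨i, hi⟩).castSucc := by
  have hsa : p.succAbove ⟨i, hi⟩ = Fin.castSucc ⟨i, hi⟩ :=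
    Fin.succAbove_of_castSucc_lt _ _ (by simpa [Fin.lt_def] using h)
  have := ins_apply_succAbove p τ ⟨i, hi⟩
  rw [hsa] at this
  simpa [Fin.castSucc, Fin.castAdd, Fin.castLE] using this

lemma ins_apply_ge (p : Fin (n + 1)) (τ : Equiv.Perm (Fin n)) {i : ℕ} (hi : i < n)
    (h : (p : ℕ) ≤ i) :
    ins p τ ⟨i + 1, Nat.succ_lt_succ hi⟩ = (τ ⟨i, hi⟩).castSucc := by
  have hsa : p.succAbove ⟨i, hi⟩ = Fin.succ ⟨i, hi⟩ :=
    Fin.succAbove_of_le_castSucc _ _ (by simpa [Fin.le_def] using h)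
  have := ins_apply_succAbove p τ ⟨i, hi⟩
  rw [hsa] at this
  simpa [Fin.succ] using this

end Stmt6
namespace Stmt6
variable {n : ℕ} (p : Fin (n + 1)) (τ : Equiv.Perm (Fin n))

lemma dp_iff {j : ℕ} (h1 : j + 1 < n) (τ : Equiv.Perm (Fin n)) :
    dp τ j ↔ τ ⟨j + 1, h1⟩ < τ ⟨j, Nat.lt_of_succ_lt h1⟩ := by
  unfold dp df
  rw [dif_pos h1]
  split_ifs <;> simp_all

lemma df_ins_lt {i : ℕ} (h : i + 1 < (p : ℕ)) : df (ins p τ) i = df τ i := by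
  have hP : (p : ℕ) ≤ n := Nat.lt_succ_iff.mp p.isLt
  have h1 : i + 1 < n := lt_of_lt_of_le h hP
  have e1 : ins p τ ⟨i + 1, Nat.lt_succ_of_lt h1⟩ = (τ ⟨i + 1, h1⟩).castSucc :=
    ins_apply_lt p τ h1 h
  have e0 : ins p τ ⟨i, Nat.lt_succ_of_lt (Nat.lt_of_succ_lt h1)⟩
      = (τ ⟨i, Nat.lt_of_succ_lt h1⟩).castSucc :=
    ins_apply_lt p τ (Nat.lt_of_succ_lt h1) (by omega)
  unfold df
  rw [dif_pos (show i + 1 < n + 1 by omega), dif_pos h1, e1, e0]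
  simp only [Fin.castSucc_lt_castSucc_iff]

lemma df_ins_eq {i : ℕ} (h : i + 1 = (p : ℕ)) : df (ins p τ) i = 0 := by
  have hP : (p : ℕ) ≤ n := Nat.lt_succ_iff.mp p.isLt
  have h1 : i + 1 < n + 1 := by omega
  have hp : (⟨i + 1, h1⟩ : Fin (n + 1)) = p := Fin.ext h
  unfold df
  rw [dif_pos h1, hp, ins_apply_self, if_neg (not_lt.mpr (Fin.le_last _))]

lemma df_ins_self : df (ins p τ) (p : ℕ) = if (p : ℕ) < n then (p : ℕ) + 1 else 0 := by
  have hP : (p : ℕ) ≤ n := Nat.lt_succ_iff.mp p.isLt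
  by_cases hlt : (p : ℕ) < n
  · have h1 : (p : ℕ) + 1 < n + 1 := by omega
    have e1 : ins p τ ⟨(p : ℕ) + 1, h1⟩ = (τ ⟨(p : ℕ), hlt⟩).castSucc :=
      ins_apply_ge p τ hlt le_rfl
    have hp : (⟨(p : ℕ), Nat.lt_of_succ_lt h1⟩ : Fin (n + 1)) = p := Fin.ext rfl
    unfold df
    rw [dif_pos h1, hp, ins_apply_self, e1, if_pos (Fin.castSucc_lt_last _), if_pos hlt]
  · unfold df
    rw [dif_neg (by omega), if_neg hlt]

lemma df_ins_ge {i : ℕ} (h : (p : ℕ) ≤ i) (hi : i < n) :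
    df (ins p τ) (i + 1) = if dp τ i then i + 2 else 0 := by
  by_cases h1 : i + 1 < n
  · have e2 : ins p τ ⟨i + 1 + 1, Nat.succ_lt_succ h1⟩ = (τ ⟨i + 1, h1⟩).castSucc :=
      ins_apply_ge p τ h1 (by omega)
    have e1 : ins p τ ⟨i + 1, Nat.succ_lt_succ hi⟩ = (τ ⟨i, hi⟩).castSucc :=
      ins_apply_ge p τ hi h
    unfold df
    rw [dif_pos (show i + 1 + 1 < n + 1 by omega), e2]
    have : (⟨i + 1, Nat.lt_of_succ_lt (show i+1+1 < n+1 by omega)⟩ : Fin (n+1))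
        = ⟨i + 1, Nat.succ_lt_succ hi⟩ := rfl
    rw [this, e1]
    simp only [Fin.castSucc_lt_castSucc_iff]
    have hdp := dp_iff h1 τ
    have : (⟨i, Nat.lt_of_succ_lt h1⟩ : Fin n) = ⟨i, hi⟩ := rfl
    rw [this] at hdp
    split_ifs with h2 h3 h3 <;> simp_all
  · have h1' : i + 1 = n := by omega
    have hdp : ¬ dp τ i := fun hc => absurd (dp_lt τ hc) h1
    unfold df
    rw [dif_neg (by omega), if_neg hdp]

end Stmt6
namespace Stmt6
variable {n : ℕ} (p : Fin (n + 1)) (τ : Equiv.Perm (Fin n))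

/-- Number of descents at position `≥ P`. -/
def cnt (τ : Equiv.Perm (Fin n)) (P : ℕ) : ℕ := ((Ico P n).filter (dp τ)).card

def ad (τ : Equiv.Perm (Fin n)) (P : ℕ) : ℕ := if 1 ≤ P ∧ dp τ (P - 1) then P else 0

/-- maj increment when inserting the max at position `P`. -/
def gg (τ : Equiv.Perm (Fin n)) (P : ℕ) : ℕ :=
  cnt τ P + (if P < n then P + 1 else 0) - ad τ P

lemma maj_ins :
    maj (ins p τ) + ad τ (p : ℕ)
      = maj τ + cnt τ (p : ℕ) + (if (p : ℕ) < n then (p : ℕ) + 1 else 0) := by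
  have hP : (p : ℕ) ≤ n := Nat.lt_succ_iff.mp p.isLt
  have hshift : ∑ i ∈ Ico ((p : ℕ) + 1) (n + 1), df (ins p τ) i
      = ∑ j ∈ Ico (p : ℕ) n, df τ j + cnt τ (p : ℕ) := by
    have hmap : Ico ((p : ℕ) + 1) (n + 1) = (Ico (p : ℕ) n).map (addRightEmbedding 1) := by
      rw [Finset.map_add_right_Ico]
    rw [hmap, Finset.sum_map]
    have hcong : ∀ j ∈ Ico (p : ℕ) n,
        df (ins p τ) (addRightEmbedding 1 j) = df τ j + (if dp τ j then 1 else 0) := by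
      intro j hj
      simp only [mem_Ico] at hj
      have he : addRightEmbedding 1 j = j + 1 := rfl
      rw [he, df_ins_ge p τ hj.1 hj.2, df_eq]
      split_ifs <;> omega
    rw [Finset.sum_congr rfl hcong, Finset.sum_add_distrib]
    congr 1
    rw [cnt, Finset.card_filter]
  have hsplit : maj (ins p τ)
      = ∑ i ∈ Ico 0 (p : ℕ), df (ins p τ) i + df (ins p τ) (p : ℕ)
        + ∑ i ∈ Ico ((p : ℕ) + 1) (n + 1), df (ins p τ) i := by
    rw [maj, range_eq_Ico,
      ← Finset.sum_Ico_consecutive _ (Nat.zero_le (p : ℕ)) (by omega : (p : ℕ) ≤ n + 1),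
      Finset.sum_eq_sum_Ico_succ_bot (by omega : (p : ℕ) < n + 1)]
    ring
  rcases Nat.eq_zero_or_pos (p : ℕ) with h0 | h0
  · have had : ad τ 0 = 0 := by unfold ad; simp
    have hmajτ : maj τ = ∑ j ∈ Ico 0 n, df τ j := by rw [maj, range_eq_Ico]
    have hds := df_ins_self p τ
    rw [h0] at hsplit hshift hds ⊢
    rw [hsplit, hshift, hds, had, hmajτ]
    simp only [Finset.sum_Ico_eq_sum_range, Nat.sub_zero, Nat.zero_add, Finset.sum_empty,
      Finset.Ico_self]
    omega
  · obtain ⟨Q, hQ⟩ : ∃ Q, (p : ℕ) = Q + 1 := ⟨(p : ℕ) - 1, by omega⟩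
    have hQn : Q < n := by omega
    have hlow : ∑ i ∈ Ico 0 (p : ℕ), df (ins p τ) i = ∑ i ∈ Ico 0 Q, df τ i := by
      rw [hQ, Finset.sum_Ico_succ_top (Nat.zero_le Q),
        df_ins_eq p τ (by omega : Q + 1 = (p : ℕ))]
      rw [Finset.sum_congr rfl (fun i hi => df_ins_lt p τ (by
        simp only [mem_Ico] at hi; omega))]
      omega
    have hτsplit : maj τ = ∑ i ∈ Ico 0 Q, df τ i + df τ Q + ∑ j ∈ Ico (p : ℕ) n, df τ j := by
      rw [maj, range_eq_Ico,
        ← Finset.sum_Ico_consecutive _ (Nat.zero_le Q) (le_of_lt hQn),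
        Finset.sum_eq_sum_Ico_succ_bot hQn, hQ]
      ring
    have had : ad τ (p : ℕ) = df τ Q := by
      unfold ad
      rw [df_eq]
      have : (p : ℕ) - 1 = Q := by omega
      rw [this]
      split_ifs with h1 h2 <;> simp_all <;> omega
    rw [hsplit, hshift, hlow, df_ins_self, hτsplit, had]
    ring

lemma ad_le (P : ℕ) : ad τ P ≤ (if P < n then P + 1 else 0) := by
  unfold ad
  split_ifs with h1 h2 h2
  · omega
  · exact absurd (by have := dp_lt τ h1.2; omega) h2
  all_goals omega

lemma maj_ins' : maj (ins p τ) = maj τ + gg τ (p : ℕ) := by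
  have h1 := maj_ins p τ
  have h2 := ad_le τ (p : ℕ)
  unfold gg
  omega

end Stmt6
namespace Stmt6
variable {n : ℕ} (τ : Equiv.Perm (Fin n))

lemma cnt_split {P P' : ℕ} (h : P ≤ P') (h' : P' ≤ n) :
    cnt τ P = ((Ico P P').filter (dp τ)).card + cnt τ P' := by
  unfold cnt
  rw [← Finset.Ico_union_Ico_eq_Ico h h', Finset.filter_union,
    Finset.card_union_of_disjoint
      ((Finset.Ico_disjoint_Ico_consecutive P P' n).mono
        (Finset.filter_subset _ _) (Finset.filter_subset _ _))]

lemma cnt_lt {P P' : ℕ} (h : P < P') (h1 : 1 ≤ P') (hd : dp τ (P' - 1)) :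
    cnt τ P' < cnt τ P := by
  have hn : P' ≤ n := by have := dp_lt τ hd; omega
  rw [cnt_split τ h.le hn]
  have hmem : P' - 1 ∈ (Ico P P').filter (dp τ) := by
    simp only [mem_filter, mem_Ico]
    exact ⟨⟨by omega, by omega⟩, hd⟩
  have := Finset.card_pos.mpr ⟨P' - 1, hmem⟩
  omega

lemma cnt_le_add {P P' : ℕ} (h : P ≤ P') (h' : P' ≤ n) :
    cnt τ P ≤ cnt τ P' + (P' - P) := by
  rw [cnt_split τ h h']
  have := Finset.card_filter_le (Ico P P') (dp τ)
  rw [Nat.card_Ico] at this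
  omega

lemma cnt_le_add' {P P' : ℕ} (h : P < P') (h' : P' ≤ n) (hd : ¬ dp τ (P' - 1)) :
    cnt τ P ≤ cnt τ P' + (P' - P - 1) := by
  rw [cnt_split τ h.le h']
  have hsub : (Ico P P').filter (dp τ) ⊆ Ico P (P' - 1) := by
    intro j hj
    simp only [mem_filter, mem_Ico] at hj ⊢
    refine ⟨hj.1.1, ?_⟩
    rcases Nat.lt_or_ge j (P' - 1) with hc | hc
    · exact hc
    · exfalso; have : j = P' - 1 := by omega
      exact hd (this ▸ hj.2)
  have := Finset.card_le_card hsub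
  rw [Nat.card_Ico] at this
  omega

lemma cnt_bound {P : ℕ} (h : P < n) : cnt τ P + P + 1 ≤ n := by
  have hsub : (Ico P n).filter (dp τ) ⊆ Ico P (n - 1) := by
    intro j hj
    simp only [mem_filter, mem_Ico] at hj ⊢
    have := dp_lt τ hj.2
    exact ⟨hj.1.1, by omega⟩
  have := Finset.card_le_card hsub
  rw [Nat.card_Ico] at this
  unfold cnt
  omega

lemma cnt_top : cnt τ n = 0 := by
  unfold cnt
  simp

lemma gg_le {P : ℕ} (hP : P ≤ n) : gg τ P ≤ n := by
  unfold gg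
  rcases Nat.lt_or_ge P n with h | h
  · have := cnt_bound τ h
    rw [if_pos h]
    omega
  · have hPe : P = n := by omega
    rw [hPe, cnt_top, if_neg (lt_irrefl n)]
    omega

lemma gg_inj_lt {P P' : ℕ} (h : P < P') (h' : P' ≤ n) : gg τ P ≠ gg τ P' := by
  have hPn : P < n := by omega
  unfold gg ad
  by_cases h1 : 1 ≤ P ∧ dp τ (P - 1) <;> by_cases h2 : 1 ≤ P' ∧ dp τ (P' - 1)
  · -- both descent type
    have hc := cnt_lt τ h h2.1 h2.2
    have hP'n : P' < n := by have := dp_lt τ h2.2; omega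
    rw [if_pos h1, if_pos h2, if_pos hPn, if_pos hP'n]
    have hb := cnt_bound τ hPn
    omega
  · -- P descent, P' not
    have hP1 : 1 ≤ P := h1.1
    have hb := cnt_le_add τ h.le h'
    rw [if_pos h1, if_neg h2, if_pos hPn]
    have hbP := cnt_bound τ hPn
    rcases Nat.lt_or_ge P' n with hP'n | hP'n
    · rw [if_pos hP'n]
      omega
    · have hPe : P' = n := by omega
      rw [hPe, if_neg (lt_irrefl n), cnt_top]
      omega
  · -- P not descent, P' descent
    have hc := cnt_lt τ h h2.1 h2.2
    have hP'n : P' < n := by have := dp_lt τ h2.2; omega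
    rw [if_neg h1, if_pos h2, if_pos hPn, if_pos hP'n]
    omega
  · -- both non-descent
    have hP'1 : 1 ≤ P' := by omega
    have hnd : ¬ dp τ (P' - 1) := fun hc => h2 ⟨hP'1, hc⟩
    have hb := cnt_le_add' τ h h' hnd
    rw [if_neg h1, if_neg h2, if_pos hPn]
    rcases Nat.lt_or_ge P' n with hP'n | hP'n
    · rw [if_pos hP'n]
      omega
    · have hPe : P' = n := by omega
      rw [hPe, if_neg (lt_irrefl n), cnt_top]
      omega

lemma gg_bijective :
    Function.Bijective (fun p : Fin (n + 1) =>
      (⟨gg τ (p : ℕ), Nat.lt_succ_of_le (gg_le τ (Nat.lt_succ_iff.mp p.isLt))⟩ :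
        Fin (n + 1))) := by
  rw [Fintype.bijective_iff_injective_and_card]
  refine ⟨?_, rfl⟩
  intro a b hab
  have hab' : gg τ (a : ℕ) = gg τ (b : ℕ) := congrArg Fin.val hab
  by_contra hne
  have hne' : (a : ℕ) ≠ (b : ℕ) := fun hc => hne (Fin.ext hc)
  rcases Nat.lt_or_ge (a : ℕ) (b : ℕ) with hlt | hge
  · exact gg_inj_lt τ hlt (Nat.lt_succ_iff.mp b.isLt) hab'
  · exact gg_inj_lt τ (by omega) (Nat.lt_succ_iff.mp a.isLt) hab'.symm

lemma sum_gg (q : ℝ) :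
    ∑ p : Fin (n + 1), q ^ gg τ (p : ℕ) = ∑ k ∈ range (n + 1), q ^ k := by
  rw [← Fin.sum_univ_eq_sum_range (fun k => q ^ k) (n + 1)]
  exact Fintype.sum_bijective _ (gg_bijective τ) _ _ (fun p => rfl)

end Stmt6
namespace Stmt6
variable {n : ℕ}

lemma ins_bijective :
    Function.Bijective (fun x : Fin (n + 1) × Equiv.Perm (Fin n) => ins x.1 x.2) := by
  rw [Fintype.bijective_iff_injective_and_card]
  constructor
  · rintro ⟨p, τ⟩ ⟨p', τ'⟩ h
    simp only at h
    have hp : p = p' := by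
      have h1 : ins p τ p' = Fin.last n := by rw [h, ins_apply_self]
      have h2 : ins p τ p = Fin.last n := ins_apply_self p τ
      exact ((ins p τ).injective (h2.trans h1.symm)).symm ▸ rfl
    subst hp
    have hτ : τ = τ' := by
      ext j
      have h1 : (τ j).castSucc = (τ' j).castSucc := by
        rw [← ins_apply_succAbove p τ j, ← ins_apply_succAbove p τ' j, h]
      exact congrArg Fin.val (Fin.castSucc_injective n h1)
    rw [hτ]
  · rw [Fintype.card_prod, Fintype.card_perm, Fintype.card_perm, Fintype.card_fin,
      Fintype.card_fin, Nat.factorial_succ]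

lemma step (q : ℝ) :
    ∑ σ : Equiv.Perm (Fin (n + 1)), q ^ maj σ
      = (∑ k ∈ range (n + 1), q ^ k) * ∑ τ : Equiv.Perm (Fin n), q ^ maj τ := by
  rw [← Fintype.sum_bijective _ ins_bijective
      (fun x : Fin (n + 1) × Equiv.Perm (Fin n) => q ^ maj (ins x.1 x.2))
      (fun σ => q ^ maj σ) (fun x => rfl)]
  rw [Fintype.sum_prod_type]
  have h1 : ∀ p : Fin (n + 1), ∀ τ : Equiv.Perm (Fin n),
      q ^ maj (ins p τ) = q ^ maj τ * q ^ gg τ (p : ℕ) := by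
    intro p τ
    rw [maj_ins' p τ, pow_add]
  calc ∑ p : Fin (n + 1), ∑ τ : Equiv.Perm (Fin n), q ^ maj (ins p τ)
      = ∑ τ : Equiv.Perm (Fin n), ∑ p : Fin (n + 1), q ^ maj τ * q ^ gg τ (p : ℕ) := by
        rw [Finset.sum_comm]
        exact Finset.sum_congr rfl fun τ _ => Finset.sum_congr rfl fun p _ => h1 p τ
    _ = ∑ τ : Equiv.Perm (Fin n), q ^ maj τ * ∑ p : Fin (n + 1), q ^ gg τ (p : ℕ) := by
        simp_rw [Finset.mul_sum]
    _ = ∑ τ : Equiv.Perm (Fin n), q ^ maj τ * ∑ k ∈ range (n + 1), q ^ k := by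
        exact Finset.sum_congr rfl fun τ _ => by rw [sum_gg]
    _ = (∑ k ∈ range (n + 1), q ^ k) * ∑ τ : Equiv.Perm (Fin n), q ^ maj τ := by
        rw [← Finset.sum_mul]
        ring

lemma main (q : ℝ) (hq : q ≠ 1) :
    ∀ n : ℕ, ∑ σ : Equiv.Perm (Fin n), q ^ maj σ
      = ∏ m ∈ Icc 1 n, (q ^ m - 1) / (q - 1) := by
  intro n
  induction n with
  | zero =>
    rw [show Icc 1 0 = (∅ : Finset ℕ) from rfl, Finset.prod_empty]
    have hmaj : ∀ σ : Equiv.Perm (Fin 0), maj σ = 0 := by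
      intro σ; rw [maj]; simp
    simp only [hmaj, pow_zero]
    rw [Finset.sum_const, Finset.card_univ, Fintype.card_perm, Fintype.card_fin]
    simp
  | succ n ih =>
    rw [step, ih, Finset.prod_Icc_succ_top (by omega : 1 ≤ n + 1),
      geom_sum_eq hq (n + 1)]
    ring

end Stmt6

/-- The generating function of the major index over the symmetric group `S_n` is the
`q`-factorial: `∑_{σ ∈ S_n} q^(maj σ) = ∏_{m=1}^n (q^m - 1)/(q - 1)`.  Here the major
index of `σ` is the sum of the positions `i ∈ {1, …, n-1}` with `σ(i) > σ(i+1)`;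
permutations act on `Fin n` (0-indexed), so position `i+1` (1-indexed) corresponds to
the descent `σ ⟨i+1⟩ < σ i` and contributes `i + 1`. -/
theorem stmt_6 (q : ℝ) (hq : q ≠ 1) (n : ℕ) (hn : 0 < n) :
    ∑ σ : Equiv.Perm (Fin n),
        q ^ (∑ i : Fin n, if h : (i : ℕ) + 1 < n then
          (if σ ⟨(i : ℕ) + 1, h⟩ < σ i then (i : ℕ) + 1 else 0) else 0)
      = ∏ m ∈ Finset.Icc 1 n, (q ^ m - 1) / (q - 1) := by
  have hexp : ∀ σ : Equiv.Perm (Fin n),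
      (∑ i : Fin n, if h : (i : ℕ) + 1 < n then
        (if σ ⟨(i : ℕ) + 1, h⟩ < σ i then (i : ℕ) + 1 else 0) else 0) = Stmt6.maj σ := by
    intro σ
    rw [Stmt6.maj, ← Fin.sum_univ_eq_sum_range (fun j => Stmt6.df σ j) n]
    refine Finset.sum_congr rfl fun i _ => ?_
    simp [Stmt6.df]
  rw [Finset.sum_congr rfl fun σ _ => by rw [hexp σ]]
  exact Stmt6.main q hq n
end

section
/- For any partitions μ and ν, the product Σ_μ · Σ_ν in the center of ℂS_n equals ∑_M Σ_{ρ(M)}, where the sum runs over partial matchings M between the index set of the entries of the cycles of μ and that of ν, and ρ(M) is a partition depending only on M with |ρ(M)| = |μ| + |ν| - |M|. In particular, Σ_μ · Σ_ν = Σ_{μ∪ν} + ∑_{|ρ| < |μ|+|ν|} c^ρ_{μ,ν} Σ_ρ for some nonnegative integers c^ρ_{μ,ν}. -/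
open scoped BigOperators

/-- The normalized conjugacy class element `Σ_ρ` in the group algebra `ℂ S_n`, for a
composition `ρ`: the sum over families of pairwise disjoint arrangements
`A_i : Fin ρ_i ↪ Fin n` of the products of cycles `C(A_1) ⋯ C(A_r)`. -/
noncomputable def SigmaL (n : ℕ) (ρ : List ℕ) :
    MonoidAlgebra ℂ (Equiv.Perm (Fin n)) :=
  ∑ A : (∀ i : Fin ρ.length, Fin (ρ.get i) ↪ Fin n),
    if ∀ i j : Fin ρ.length, i ≠ j → ∀ x y, A i x ≠ A j y then
      MonoidAlgebra.of ℂ (Equiv.Perm (Fin n))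
        ((List.ofFn fun i => (List.ofFn (A i)).formPerm).prod)
    else 0

/-- The index set of the entries of the cycles of a composition `μ`. -/
abbrev CycIdx (μ : List ℕ) : Type := Σ i : Fin μ.length, Fin (μ.get i)

/-- A partial matching between the index sets: a set of pairs which is the graph of a
partially defined injection in both directions. -/
def IsMatching {μ ν : List ℕ} (M : Finset (CycIdx μ × CycIdx ν)) : Prop :=
  ∀ p ∈ M, ∀ r ∈ M, (Prod.fst p = Prod.fst r ↔ Prod.snd p = Prod.snd r)


instance {μ ν : List ℕ} : DecidablePred (IsMatching (μ := μ) (ν := ν)) := fun _ => by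
  unfold IsMatching; infer_instance

open Equiv Function

namespace Stmt8

/-- extension of viaEmbedding along composition -/
lemma via_trans {α β γ : Type*} (π : Equiv.Perm α) (f : α ↪ β) (g : β ↪ γ) :
    (π.viaEmbedding f).viaEmbedding g = π.viaEmbedding (f.trans g) := by
  ext x
  by_cases hx : x ∈ Set.range (f.trans g)
  · obtain ⟨y, rfl⟩ := hx
    have : (f.trans g) y = g (f y) := rfl
    rw [Equiv.Perm.viaEmbedding_apply, this, Equiv.Perm.viaEmbedding_apply,
      Equiv.Perm.viaEmbedding_apply]
    rfl
  · rw [Equiv.Perm.viaEmbedding_apply_of_notMem _ _ _ hx]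
    by_cases hg : x ∈ Set.range g
    · obtain ⟨z, rfl⟩ := hg
      have hz : z ∉ Set.range f := by
        rintro ⟨w, rfl⟩; exact hx ⟨w, rfl⟩
      rw [Equiv.Perm.viaEmbedding_apply, Equiv.Perm.viaEmbedding_apply_of_notMem _ _ _ hz]
    · rw [Equiv.Perm.viaEmbedding_apply_of_notMem _ _ _ hg]

lemma via_mul {α β : Type*} (π₁ π₂ : Equiv.Perm α) (f : α ↪ β) :
    (π₁ * π₂).viaEmbedding f = π₁.viaEmbedding f * π₂.viaEmbedding f :=
  map_mul (Equiv.Perm.viaEmbeddingHom f) π₁ π₂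

lemma via_isEmpty {α β : Type*} [IsEmpty α] (π : Equiv.Perm α) (f : α ↪ β) :
    π.viaEmbedding f = 1 := by
  ext x
  rw [Equiv.Perm.viaEmbedding_apply_of_notMem]
  · rfl
  · rintro ⟨y, -⟩; exact isEmptyElim y

lemma finRotate_eq {k : ℕ} (i : Fin k) :
    finRotate k i = ⟨(i.1 + 1) % k, Nat.mod_lt _ (Nat.pos_of_ne_zero (by rintro rfl; exact i.elim0))⟩ := by
  rcases k with - | m
  · exact i.elim0
  · apply Fin.ext
    rw [finRotate_succ_apply, Fin.val_add_one]
    split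
    · rename_i h
      subst h
      simp [Fin.last]
    · rename_i h
      have : (i : ℕ) + 1 < m + 1 := by
        have := Fin.val_lt_last h
        omega
      exact (Nat.mod_eq_of_lt this).symm

/-- formPerm of a list of distinct values is a rotation via the embedding. -/
lemma formPerm_ofFn {k n : ℕ} (b : Fin k ↪ Fin n) :
    (List.ofFn b).formPerm = (finRotate k).viaEmbedding b := by
  ext x
  by_cases hx : x ∈ Set.range b
  · obtain ⟨i, rfl⟩ := hx
    have hlen : (List.ofFn b).length = k := List.length_ofFn
    have hnd : (List.ofFn b).Nodup := List.nodup_ofFn.mpr b.injective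
    have hi : (i : ℕ) < (List.ofFn b).length := by rw [hlen]; exact i.isLt
    have h1 : b i = (List.ofFn b)[(i : ℕ)] := by simp
    rw [Equiv.Perm.viaEmbedding_apply, h1, List.formPerm_apply_getElem _ hnd _ hi]
    have h2 : ((i : ℕ) + 1) % (List.ofFn b).length = ((i : ℕ) + 1) % k := by rw [hlen]
    rw [finRotate_eq]
    simp [h2]
  · rw [List.formPerm_apply_of_notMem, Equiv.Perm.viaEmbedding_apply_of_notMem _ _ _ hx]
    rw [List.mem_ofFn]
    exact hx


/-- embedding of a fiber into the sigma type -/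
def mkEmb {m : ℕ} {β : Fin m → Type*} (i : Fin m) : β i ↪ Σ j, β j :=
  ⟨Sigma.mk i, sigma_mk_injective⟩

def succEmb {m : ℕ} (β : Fin (m + 1) → Type*) : (Σ j : Fin m, β j.succ) ↪ Σ i, β i :=
  ⟨fun p => ⟨p.1.succ, p.2⟩, by
    rintro ⟨j, x⟩ ⟨j', x'⟩ h
    obtain ⟨h1, h2⟩ := Sigma.mk.inj_iff.mp h
    obtain rfl : j = j' := Fin.succ_injective _ h1
    simpa using h2⟩

lemma key_split {m : ℕ} {β : Fin (m + 1) → Type*} (π : ∀ i, Equiv.Perm (β i)) :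
    Equiv.sigmaCongrRight π =
      ((π 0).viaEmbedding (mkEmb 0)) *
        (Equiv.Perm.viaEmbedding (Equiv.sigmaCongrRight fun j : Fin m => π j.succ) (succEmb β)) := by
  apply Equiv.ext
  rintro ⟨i, x⟩
  induction i using Fin.cases with
  | zero =>
    have h1 : (⟨0, x⟩ : Σ i, β i) ∉ Set.range (succEmb β) := by
      rintro ⟨⟨j, y⟩, hj⟩
      have := congrArg Sigma.fst hj
      exact Fin.succ_ne_zero j this
    rw [Equiv.Perm.mul_apply, Equiv.Perm.viaEmbedding_apply_of_notMem _ _ _ h1]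
    have h2 : (⟨0, x⟩ : Σ i, β i) = mkEmb 0 x := rfl
    rw [h2, Equiv.Perm.viaEmbedding_apply]
    rfl
  | succ j =>
    have h2 : (⟨j.succ, x⟩ : Σ i, β i) = succEmb β ⟨j, x⟩ := rfl
    rw [Equiv.Perm.mul_apply, h2, Equiv.Perm.viaEmbedding_apply]
    have h3 : succEmb β ((Equiv.sigmaCongrRight fun j : Fin m => π j.succ) ⟨j, x⟩)
        = ⟨j.succ, π j.succ x⟩ := rfl
    rw [h3]
    have h1 : (⟨j.succ, π j.succ x⟩ : Σ i, β i) ∉ Set.range (mkEmb (0 : Fin (m+1))) := by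
      rintro ⟨y, hy⟩
      have := congrArg Sigma.fst hy
      exact Fin.succ_ne_zero j this.symm
    rw [Equiv.Perm.viaEmbedding_apply_of_notMem _ _ _ h1]
    rfl

/-- product of disjoint cycles written via a global embedding -/
lemma prod_via {γ : Type*} : ∀ (m : ℕ) (β : Fin m → Type*) (π : ∀ i, Equiv.Perm (β i))
    (c : (Σ i, β i) ↪ γ),
    (List.ofFn fun i => (π i).viaEmbedding ((mkEmb i).trans c)).prod
      = Equiv.Perm.viaEmbedding (Equiv.sigmaCongrRight π) c := by
  intro m
  induction m with
  | zero =>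
    intro β π c
    haveI : IsEmpty (Σ i : Fin 0, β i) := ⟨fun p => p.1.elim0⟩
    rw [List.ofFn_zero, List.prod_nil, via_isEmpty]
  | succ m IH =>
    intro β π c
    rw [List.ofFn_succ, List.prod_cons]
    have htail : (List.ofFn fun i : Fin m => (π i.succ).viaEmbedding ((mkEmb i.succ).trans c)).prod
        = Equiv.Perm.viaEmbedding (Equiv.sigmaCongrRight fun j : Fin m => π j.succ) ((succEmb β).trans c) := by
      exact IH (fun j => β j.succ) (fun j => π j.succ) ((succEmb β).trans c)
    rw [htail, ← via_trans, ← via_trans, ← via_mul, ← key_split]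

def rotL (ρ : List ℕ) : Equiv.Perm (CycIdx ρ) :=
  Equiv.sigmaCongrRight fun i => finRotate (ρ.get i)

noncomputable def SigmaP (n : ℕ) (α : Type) [Fintype α] (π : Equiv.Perm α) :
    MonoidAlgebra ℂ (Equiv.Perm (Fin n)) :=
  ∑ c : α ↪ Fin n, MonoidAlgebra.of ℂ (Equiv.Perm (Fin n)) (π.viaEmbedding c)

def famEquiv (n : ℕ) (ρ : List ℕ) :
    {A : ∀ i : Fin ρ.length, Fin (ρ.get i) ↪ Fin n //
      ∀ i j : Fin ρ.length, i ≠ j → ∀ x y, A i x ≠ A j y} ≃ (CycIdx ρ ↪ Fin n) where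
  toFun A := ⟨fun p => A.1 p.1 p.2, by
    rintro ⟨i, x⟩ ⟨j, y⟩ h
    by_cases hij : i = j
    · subst hij
      exact congrArg (Sigma.mk i) ((A.1 i).injective h)
    · exact absurd h (A.2 i j hij x y)⟩
  invFun c := ⟨fun i => (mkEmb i).trans c, fun i j hij x y h => by
    have := c.injective h
    exact hij (congrArg Sigma.fst this)⟩
  left_inv A := rfl
  right_inv c := rfl

lemma SigmaL_eq (n : ℕ) (ρ : List ℕ) : SigmaL n ρ = SigmaP n (CycIdx ρ) (rotL ρ) := by
  have key : ∀ (c : CycIdx ρ ↪ Fin n),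
      (List.ofFn fun i => (List.ofFn (fun x => c ⟨i, x⟩)).formPerm).prod
        = (rotL ρ).viaEmbedding c := by
    intro c
    have h1 : (fun i : Fin ρ.length => (List.ofFn (fun x => c ⟨i, x⟩)).formPerm)
        = fun i => (finRotate (ρ.get i)).viaEmbedding ((mkEmb i).trans c) := by
      funext i
      exact formPerm_ofFn ((mkEmb i).trans c)
    rw [h1, prod_via ρ.length (fun i => Fin (ρ.get i)) (fun i => finRotate (ρ.get i)) c]
    rfl
  rw [SigmaL, ← Finset.sum_filter, SigmaP]
  rw [Finset.sum_subtype (p := fun A : ∀ i : Fin ρ.length, Fin (ρ.get i) ↪ Fin n =>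
        ∀ i j : Fin ρ.length, i ≠ j → ∀ x y, A i x ≠ A j y)
    (Finset.univ.filter
      (fun A : ∀ i : Fin ρ.length, Fin (ρ.get i) ↪ Fin n =>
        ∀ i j : Fin ρ.length, i ≠ j → ∀ x y, A i x ≠ A j y))
    (by intro x; simp) (fun A => MonoidAlgebra.of ℂ (Equiv.Perm (Fin n))
      ((List.ofFn fun i => (List.ofFn (A i)).formPerm).prod))]
  apply Fintype.sum_equiv (famEquiv n ρ)
  intro A
  congr 1
  exact key (famEquiv n ρ A)

lemma SigmaP_congr {n : ℕ} {α β : Type} [Fintype α] [Fintype β]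
    (π : Equiv.Perm α) (π' : Equiv.Perm β) (e : α ≃ β) (h : ∀ x, e (π x) = π' (e x)) :
    SigmaP n α π = SigmaP n β π' := by
  rw [SigmaP, SigmaP]
  apply Fintype.sum_bijective (fun c : α ↪ Fin n => e.symm.toEmbedding.trans c)
  · constructor
    · intro c₁ c₂ hc
      ext x
      have := congrArg (fun d : β ↪ Fin n => d (e x)) hc
      have h2 : c₁ x = c₂ x := by simpa using this
      exact congrArg Fin.val h2
    · intro d
      refine ⟨e.toEmbedding.trans d, ?_⟩
      ext x
      simp
  · intro c
    congr 1
    ext y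
    by_cases hy : y ∈ Set.range c
    · obtain ⟨z, rfl⟩ := hy
      have h2 : c z = (e.symm.toEmbedding.trans c) (e z) := by simp
      rw [Equiv.Perm.viaEmbedding_apply, h2, Equiv.Perm.viaEmbedding_apply]
      have h3 : e.symm (π' (e z)) = π z := by rw [← h]; simp
      simp [h3]
    · have hy' : y ∉ Set.range (e.symm.toEmbedding.trans c) := by
        rintro ⟨z, rfl⟩
        exact hy ⟨e.symm z, rfl⟩
      rw [Equiv.Perm.viaEmbedding_apply_of_notMem _ _ _ hy,
        Equiv.Perm.viaEmbedding_apply_of_notMem _ _ _ hy']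

def consEquiv (k : ℕ) (ρ : List ℕ) : (Fin k ⊕ CycIdx ρ) ≃ CycIdx (k :: ρ) where
  toFun := fun s => match s with
    | Sum.inl x => ⟨⟨0, Nat.succ_pos _⟩, x⟩
    | Sum.inr ⟨j, y⟩ => ⟨j.succ, y⟩
  invFun := fun p => match p with
    | ⟨⟨0, _⟩, x⟩ => Sum.inl x
    | ⟨⟨j+1, h⟩, y⟩ => Sum.inr ⟨⟨j, Nat.succ_lt_succ_iff.mp h⟩, y⟩
  left_inv := by rintro (x | ⟨⟨j, hj⟩, y⟩) <;> rfl
  right_inv := by rintro ⟨⟨(_|j), h⟩, x⟩ <;> rfl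

lemma rot_cons_inl (k : ℕ) (ρ : List ℕ) (x : Fin k) :
    rotL (k :: ρ) (consEquiv k ρ (Sum.inl x)) = consEquiv k ρ (Sum.inl (finRotate k x)) := rfl

lemma rot_cons_inr (k : ℕ) (ρ : List ℕ) (p : CycIdx ρ) :
    rotL (k :: ρ) (consEquiv k ρ (Sum.inr p)) = consEquiv k ρ (Sum.inr (rotL ρ p)) := by
  rcases p with ⟨j, y⟩
  rfl

lemma canonical : ∀ (N : ℕ) (α : Type) [Fintype α] [DecidableEq α] (π : Equiv.Perm α),
    Fintype.card α = N →
    ∃ (ρ : List ℕ) (e : α ≃ CycIdx ρ), ρ.sum = N ∧ ∀ x, e (π x) = rotL ρ (e x) := by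
  intro N
  induction N using Nat.strong_induction_on with
  | _ N IH =>
  intro α _ _ π hcard
  rcases isEmpty_or_nonempty α with hα | hα
  · haveI : IsEmpty (CycIdx ([] : List ℕ)) := ⟨fun p => p.1.elim0⟩
    refine ⟨[], Equiv.equivOfIsEmpty _ _, ?_, fun x => isEmptyElim x⟩
    simp [← hcard]
  · obtain ⟨a⟩ := hα
    have horder : Function.IsPeriodicPt (⇑π) (orderOf π) a := by
      unfold Function.IsPeriodicPt Function.IsFixedPt
      rw [Equiv.Perm.iterate_eq_pow, pow_orderOf_eq_one]
      rfl
    set k := Function.minimalPeriod (⇑π) a with hk_def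
    have hk : 0 < k := horder.minimalPeriod_pos (orderOf_pos π)
    set p : α → Prop := fun x => ∃ m : Fin k, (⇑π)^[m.1] a = x with hp_def
    haveI : DecidablePred p := fun x => by unfold p; infer_instance
    have hp : ∀ x, p x ↔ p (π x) := by
      intro x
      constructor
      · rintro ⟨m, rfl⟩
        refine ⟨⟨(m.1 + 1) % k, Nat.mod_lt _ hk⟩, ?_⟩
        rw [Function.iterate_mod_minimalPeriod_eq, Function.iterate_succ_apply']
      · rintro ⟨m, hm⟩
        rcases m with ⟨mv, hmv⟩
        match mv, hmv with
        | 0, _ =>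
          -- a = π x, so x = π^[k-1] a
          refine ⟨⟨k - 1, by omega⟩, π.injective ?_⟩
          show π ((⇑π)^[k - 1] a) = π x
          rw [← Function.iterate_succ_apply' (⇑π) (k - 1) a]
          have hk1 : (k - 1).succ = k := by omega
          rw [hk1, Function.iterate_minimalPeriod]
          exact hm
        | m' + 1, hmv' =>
          refine ⟨⟨m', by omega⟩, π.injective ?_⟩
          show π ((⇑π)^[m'] a) = π x
          rw [← Function.iterate_succ_apply' (⇑π) m' a]
          exact hm
    -- the cycle of a
    have hinj : Function.Injective (fun m : Fin k => (⇑π)^[m.1] a) := by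
      intro m m' hmm
      have := Function.iterate_injOn_Iio_minimalPeriod (f := ⇑π) (x := a) m.2 m'.2 hmm
      exact Fin.ext this
    have hsurj : Function.Surjective
        (fun m : Fin k => (⟨(⇑π)^[m.1] a, ⟨m, rfl⟩⟩ : {x // p x})) := by
      rintro ⟨x, ⟨m, hm⟩⟩
      exact ⟨m, Subtype.ext hm⟩
    set ec : Fin k ≃ {x // p x} :=
      Equiv.ofBijective (fun m => ⟨(⇑π)^[m.1] a, ⟨m, rfl⟩⟩)
        ⟨fun m m' h => hinj (congrArg Subtype.val h), hsurj⟩ with hec_def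
    have cardp : Fintype.card {x // p x} = k := by
      rw [← Fintype.card_congr ec, Fintype.card_fin]
    have cardcompl : Fintype.card {x // ¬ p x} = N - k := by
      rw [Fintype.card_subtype_compl, cardp, hcard]
    have hkN : k ≤ N := by
      rw [← cardp, ← hcard]
      exact Fintype.card_subtype_le _
    set π' : Equiv.Perm {x // ¬ p x} := π.subtypePerm
      (fun x => not_congr (hp x).symm) with hπ'_def
    obtain ⟨ρ', e', hsum', hcomm'⟩ := IH (N - k) (by omega) {x // ¬ p x} π' cardcompl
    refine ⟨k :: ρ',
      ((Equiv.sumCompl p).symm.trans ((Equiv.sumCongr ec.symm e').trans (consEquiv k ρ'))),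
      by simp [List.sum_cons, hsum']; omega, ?_⟩
    intro x
    by_cases hx : p x
    · obtain ⟨m, hm⟩ := hx
      have hpx : p x := ⟨m, hm⟩
      have hπx : p (π x) := (hp x).mp hpx
      set m1 : Fin k := ⟨(m.1 + 1) % k, Nat.mod_lt _ hk⟩ with hm1_def
      have hm1 : (⇑π)^[m1.1] a = π x := by
        rw [hm1_def]
        show (⇑π)^[(m.1+1) % k] a = π x
        rw [Function.iterate_mod_minimalPeriod_eq, Function.iterate_succ_apply', hm]
      have e1 : ∀ (y : α) (hy : p y) (my : Fin k), (⇑π)^[my.1] a = y →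
          ((Equiv.sumCompl p).symm.trans ((Equiv.sumCongr ec.symm e').trans (consEquiv k ρ'))) y
            = consEquiv k ρ' (Sum.inl my) := by
        intro y hy my hmy
        have h1 : (Equiv.sumCompl p).symm y = Sum.inl ⟨y, hy⟩ :=
          Equiv.sumCompl_symm_apply_of_pos hy
        have h2 : ec.symm ⟨y, hy⟩ = my := by
          rw [Equiv.symm_apply_eq]
          exact Subtype.ext hmy.symm
        simp [Equiv.trans_apply, h1, h2]
      rw [e1 x hpx m hm, e1 (π x) hπx m1 hm1, rot_cons_inl]
      congr 1
      congr 1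
      rw [finRotate_eq]
    · have hπx : ¬ p (π x) := fun h => hx ((hp x).mpr h)
      have e2 : ∀ (y : α) (hy : ¬ p y),
          ((Equiv.sumCompl p).symm.trans ((Equiv.sumCongr ec.symm e') |>.trans (consEquiv k ρ'))) y
            = consEquiv k ρ' (Sum.inr (e' ⟨y, hy⟩)) := by
        intro y hy
        have h1 : (Equiv.sumCompl p).symm y = Sum.inr ⟨y, hy⟩ :=
          Equiv.sumCompl_symm_apply_of_neg hy
        simp [Equiv.trans_apply, h1]
      rw [e2 x hx, e2 (π x) hπx, rot_cons_inr]
      congr 1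
      congr 1
      have : (⟨π x, hπx⟩ : {x // ¬ p x}) = π' ⟨x, hx⟩ := rfl
      rw [this, hcomm']

section Matching

variable {μ ν : List ℕ}

/-- the unmatched indices of `ν` -/
def Unm (M : Finset (CycIdx μ × CycIdx ν)) : Type :=
  {q : CycIdx ν // ∀ p : CycIdx μ, (p, q) ∉ M}

instance (M : Finset (CycIdx μ × CycIdx ν)) : Fintype (Unm M) := by
  unfold Unm; infer_instance

instance (M : Finset (CycIdx μ × CycIdx ν)) : DecidableEq (Unm M) := by
  unfold Unm; infer_instance

/-- the merged index set -/
def QM (M : Finset (CycIdx μ × CycIdx ν)) : Type := CycIdx μ ⊕ Unm M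

instance (M : Finset (CycIdx μ × CycIdx ν)) : Fintype (QM M) := by
  unfold QM; infer_instance

instance (M : Finset (CycIdx μ × CycIdx ν)) : DecidableEq (QM M) := by
  unfold QM; infer_instance

noncomputable def jmap (M : Finset (CycIdx μ × CycIdx ν)) (q : CycIdx ν) : QM M :=
  if h : ∃ p, (p, q) ∈ M then Sum.inl h.choose
  else Sum.inr ⟨q, by push_neg at h; exact h⟩

lemma jmap_spec₁ {M : Finset (CycIdx μ × CycIdx ν)} (hM : IsMatching M)
    {p : CycIdx μ} {q : CycIdx ν} (h : (p, q) ∈ M) : jmap M q = Sum.inl p := by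
  have hex : ∃ p, (p, q) ∈ M := ⟨p, h⟩
  rw [show jmap M q = Sum.inl hex.choose from dif_pos hex]
  congr 1
  exact (hM _ hex.choose_spec _ h).mpr rfl

lemma jmap_spec₂ {M : Finset (CycIdx μ × CycIdx ν)}
    {q : CycIdx ν} (h : ∀ p, (p, q) ∉ M) : jmap M q = Sum.inr ⟨q, h⟩ := by
  exact dif_neg (show ¬ ∃ p, (p, q) ∈ M by push_neg; exact h)

lemma jmap_inl {M : Finset (CycIdx μ × CycIdx ν)}
    {p : CycIdx μ} {q : CycIdx ν} (h : jmap M q = Sum.inl p) : (p, q) ∈ M := by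
  by_cases hex : ∃ r, (r, q) ∈ M
  · rw [show jmap M q = Sum.inl hex.choose from dif_pos hex] at h
    obtain rfl : hex.choose = p := Sum.inl.inj h
    exact hex.choose_spec
  · rw [show jmap M q = Sum.inr ⟨q, by push_neg at hex; exact hex⟩ from dif_neg hex] at h
    exact absurd h (by simp)

lemma jmap_injective {M : Finset (CycIdx μ × CycIdx ν)} (hM : IsMatching M) :
    Function.Injective (jmap M) := by
  intro q q' h
  by_cases hq : ∃ p, (p, q) ∈ M
  · obtain ⟨p, hp⟩ := hq
    rw [jmap_spec₁ hM hp] at h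
    have h2 : (p, q') ∈ M := jmap_inl h.symm
    exact (hM _ hp _ h2).mp rfl
  · push_neg at hq
    rw [jmap_spec₂ hq] at h
    by_cases hq' : ∃ p, (p, q') ∈ M
    · obtain ⟨p, hp⟩ := hq'
      rw [jmap_spec₁ hM hp] at h
      exact absurd h (by simp)
    · push_neg at hq'
      rw [jmap_spec₂ hq'] at h
      exact congrArg Subtype.val (Sum.inr.inj h)

noncomputable def jemb {M : Finset (CycIdx μ × CycIdx ν)} (hM : IsMatching M) :
    CycIdx ν ↪ QM M := ⟨jmap M, jmap_injective hM⟩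

def inlE (M : Finset (CycIdx μ × CycIdx ν)) : CycIdx μ ↪ QM M :=
  ⟨Sum.inl, Sum.inl_injective⟩

/-- the merged permutation -/
noncomputable def piM {M : Finset (CycIdx μ × CycIdx ν)} (hM : IsMatching M) :
    Equiv.Perm (QM M) :=
  (rotL μ).viaEmbedding (inlE M) * (rotL ν).viaEmbedding (jemb hM)

variable {n : ℕ}

/-- the matching induced by a pair of embeddings -/
def Mof (a : CycIdx μ ↪ Fin n) (b : CycIdx ν ↪ Fin n) : Finset (CycIdx μ × CycIdx ν) :=
  Finset.univ.filter (fun pq => a pq.1 = b pq.2)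

lemma mem_Mof {a : CycIdx μ ↪ Fin n} {b : CycIdx ν ↪ Fin n} {p : CycIdx μ} {q : CycIdx ν} :
    (p, q) ∈ Mof a b ↔ a p = b q := by
  simp [Mof]

lemma isMatching_Mof (a : CycIdx μ ↪ Fin n) (b : CycIdx ν ↪ Fin n) :
    IsMatching (Mof a b) := by
  rintro ⟨p, q⟩ hpq ⟨r, s⟩ hrs
  rw [mem_Mof] at hpq hrs
  constructor
  · rintro (h : p = r)
    subst h
    exact b.injective (hpq.symm.trans hrs)
  · rintro (h : q = s)
    subst h
    exact a.injective (hpq.trans hrs.symm)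

/-- the merged embedding -/
def cof (a : CycIdx μ ↪ Fin n) (b : CycIdx ν ↪ Fin n) : QM (Mof a b) ↪ Fin n :=
  ⟨Sum.elim a (fun u => b u.1), by
    rintro (p | ⟨q, hq⟩) (r | ⟨s, hs⟩) h
    · exact congrArg Sum.inl (a.injective h)
    · exact absurd (mem_Mof.mpr h) (hs p)
    · exact absurd (mem_Mof.mpr h.symm) (hq r)
    · exact congrArg Sum.inr (Subtype.ext (b.injective h))⟩

lemma cof_jmap (a : CycIdx μ ↪ Fin n) (b : CycIdx ν ↪ Fin n) (q : CycIdx ν) :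
    cof a b (jmap (Mof a b) q) = b q := by
  by_cases h : ∃ p, (p, q) ∈ Mof a b
  · obtain ⟨p, hp⟩ := h
    rw [jmap_spec₁ (isMatching_Mof a b) hp]
    exact mem_Mof.mp hp
  · push_neg at h
    rw [jmap_spec₂ h]
    rfl

lemma Mof_recover {M : Finset (CycIdx μ × CycIdx ν)} (hM : IsMatching M)
    (c : QM M ↪ Fin n) :
    Mof ((inlE M).trans c) ((jemb hM).trans c) = M := by
  ext ⟨p, q⟩
  rw [mem_Mof]
  show c (inlE M p) = c (jmap M q) ↔ (p, q) ∈ M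
  rw [c.injective.eq_iff]
  constructor
  · intro h
    exact jmap_inl h.symm
  · intro h
    exact (jmap_spec₁ hM h).symm

end Matching

section Product

variable {μ ν : List ℕ} {n : ℕ}

abbrev TM (μ ν : List ℕ) := {M : Finset (CycIdx μ × CycIdx ν) // IsMatching M}

noncomputable def Phi (x : Σ M : TM μ ν, (QM M.1 ↪ Fin n)) :
    (CycIdx μ ↪ Fin n) × (CycIdx ν ↪ Fin n) :=
  ((inlE x.1.1).trans x.2, (jemb x.1.2).trans x.2)

lemma Phi_injective : Function.Injective (Phi (μ := μ) (ν := ν) (n := n)) := by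
  rintro ⟨⟨M₁, h₁⟩, c₁⟩ ⟨⟨M₂, h₂⟩, c₂⟩ h
  obtain ⟨ha, hb⟩ := Prod.mk.inj h
  have hM : M₁ = M₂ := by
    rw [← Mof_recover h₁ c₁, ← Mof_recover h₂ c₂, ha, hb]
  subst hM
  have hc : c₁ = c₂ := by
    ext z
    rcases z with p | ⟨q, hq⟩
    · exact congrArg Fin.val (congrArg (fun d : CycIdx μ ↪ Fin n => d p) ha)
    · have h1 : jmap M₁ q = Sum.inr ⟨q, hq⟩ := jmap_spec₂ hq
      have h2 : c₁ (jmap M₁ q) = c₂ (jmap M₁ q) :=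
        congrArg (fun d : CycIdx ν ↪ Fin n => d q) hb
      rw [h1] at h2
      exact congrArg Fin.val h2
  subst hc
  rfl

lemma Phi_surjective : Function.Surjective (Phi (μ := μ) (ν := ν) (n := n)) := by
  rintro ⟨a, b⟩
  refine ⟨⟨⟨Mof a b, isMatching_Mof a b⟩, cof a b⟩, ?_⟩
  unfold Phi
  dsimp only
  refine Prod.ext ?_ ?_
  · ext p
    rfl
  · ext q
    exact congrArg Fin.val (cof_jmap a b q)

noncomputable def Ff (x : Σ M : TM μ ν, (QM M.1 ↪ Fin n)) :
    MonoidAlgebra ℂ (Equiv.Perm (Fin n)) :=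
  MonoidAlgebra.of ℂ (Equiv.Perm (Fin n)) ((piM x.1.2).viaEmbedding x.2)

noncomputable def Gg (y : (CycIdx μ ↪ Fin n) × (CycIdx ν ↪ Fin n)) :
    MonoidAlgebra ℂ (Equiv.Perm (Fin n)) :=
  MonoidAlgebra.of ℂ (Equiv.Perm (Fin n)) ((rotL μ).viaEmbedding y.1)
    * MonoidAlgebra.of ℂ (Equiv.Perm (Fin n)) ((rotL ν).viaEmbedding y.2)

lemma Phi_compat (x : Σ M : TM μ ν, (QM M.1 ↪ Fin n)) :
    Ff (n := n) x = Gg (Phi x) := by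
  obtain ⟨⟨M, hM⟩, c⟩ := x
  rw [Ff, Gg, ← map_mul, piM, via_mul, via_trans, via_trans]
  rfl

lemma prod_eq_sum_matchings :
    SigmaP n (CycIdx μ) (rotL μ) * SigmaP n (CycIdx ν) (rotL ν)
      = ∑ M : TM μ ν, SigmaP n (QM M.1) (piM M.2) := by
  calc SigmaP n (CycIdx μ) (rotL μ) * SigmaP n (CycIdx ν) (rotL ν)
      = ∑ y : (CycIdx μ ↪ Fin n) × (CycIdx ν ↪ Fin n), Gg y := by
        rw [SigmaP, SigmaP, Fintype.sum_mul_sum, Fintype.sum_prod_type]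
        rfl
    _ = ∑ x : Σ M : TM μ ν, (QM M.1 ↪ Fin n), Ff x :=
        (Fintype.sum_bijective Phi ⟨Phi_injective, Phi_surjective⟩ Ff Gg Phi_compat).symm
    _ = ∑ M : TM μ ν, ∑ c : QM M.1 ↪ Fin n, Ff ⟨M, c⟩ := by
        rw [← Finset.univ_sigma_univ]
        exact Finset.sum_sigma _ _ _
    _ = ∑ M : TM μ ν, SigmaP n (QM M.1) (piM M.2) := rfl

end Product

section Cards

lemma card_CycIdx (ρ : List ℕ) : Fintype.card (CycIdx ρ) = ρ.sum := by
  rw [Fintype.card_sigma]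
  simp only [Fintype.card_fin]
  conv_rhs => rw [← List.ofFn_get ρ]
  rw [List.sum_ofFn]

lemma card_facts {μ ν : List ℕ} {M : Finset (CycIdx μ × CycIdx ν)} (hM : IsMatching M) :
    M.card ≤ Fintype.card (CycIdx ν) ∧
      Fintype.card (Unm M) = Fintype.card (CycIdx ν) - M.card := by
  have hinj : Set.InjOn Prod.snd (M : Set (CycIdx μ × CycIdx ν)) := by
    intro x hx y hy h
    have h1 : x.1 = y.1 := (hM x hx y hy).mpr h
    exact Prod.ext h1 h
  have himg : (M.image Prod.snd).card = M.card := Finset.card_image_of_injOn hinj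
  have hset : Finset.univ.filter (fun q : CycIdx ν => ∀ p, (p, q) ∉ M)
      = Finset.univ \ M.image Prod.snd := by
    ext q
    simp only [Finset.mem_filter, Finset.mem_univ, true_and, Finset.mem_sdiff,
      Finset.mem_image, not_exists]
    constructor
    · intro h
      rintro ⟨p, q'⟩ ⟨hpq, rfl⟩
      exact h p hpq
    · intro h p hpq
      exact h (p, q) ⟨hpq, rfl⟩
  constructor
  · rw [← himg, ← Finset.card_univ]
    exact Finset.card_le_card (Finset.subset_univ _)
  · have : Fintype.card (Unm M) =
        (Finset.univ.filter (fun q : CycIdx ν => ∀ p, (p, q) ∉ M)).card :=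
      Fintype.card_subtype _
    rw [this, hset, Finset.card_sdiff_of_subset (Finset.subset_univ _), Finset.card_univ, himg]

lemma card_QM {μ ν : List ℕ} {M : Finset (CycIdx μ × CycIdx ν)} (hM : IsMatching M) :
    Fintype.card (QM M) = μ.sum + ν.sum - M.card := by
  obtain ⟨hle, hunm⟩ := card_facts hM
  have hcongr : Fintype.card (QM M) = Fintype.card (CycIdx μ) + Fintype.card (Unm M) := by
    rw [show Fintype.card (QM M) = Fintype.card (CycIdx μ ⊕ Unm M) from
      Fintype.card_congr (Equiv.refl (QM M)), Fintype.card_sum]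
  rw [card_CycIdx] at hle hunm
  rw [hcongr, hunm, card_CycIdx]
  omega

end Cards

section RhoOf

noncomputable def rhoOf {μ ν : List ℕ} (M : TM μ ν) : List ℕ :=
  (canonical (Fintype.card (QM M.1)) (QM M.1) (piM M.2) rfl).choose

lemma rhoOf_sum {μ ν : List ℕ} (M : TM μ ν) :
    (rhoOf M).sum = μ.sum + ν.sum - M.1.card := by
  obtain ⟨e, hsum, hcomm⟩ := (canonical (Fintype.card (QM M.1)) (QM M.1) (piM M.2) rfl).choose_spec
  rw [rhoOf]
  rw [hsum, card_QM M.2]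

lemma rhoOf_SigmaP {μ ν : List ℕ} (M : TM μ ν) (n : ℕ) :
    SigmaP n (QM M.1) (piM M.2) = SigmaL n (rhoOf M) := by
  obtain ⟨e, hsum, hcomm⟩ := (canonical (Fintype.card (QM M.1)) (QM M.1) (piM M.2) rfl).choose_spec
  rw [SigmaL_eq]
  exact SigmaP_congr _ _ e hcomm

end RhoOf

section Append

variable (μ ν : List ℕ)

lemma get_app_left (i : ℕ) (h : i < μ.length) (h' : i < (μ ++ ν).length) :
    (μ ++ ν).get ⟨i, h'⟩ = μ.get ⟨i, h⟩ := by
  simp only [List.get_eq_getElem]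
  exact List.getElem_append_left h

lemma get_app_right (i : ℕ) (h : μ.length ≤ i) (h' : i < (μ ++ ν).length)
    (h2 : i - μ.length < ν.length) :
    (μ ++ ν).get ⟨i, h'⟩ = ν.get ⟨i - μ.length, h2⟩ := by
  simp only [List.get_eq_getElem]
  exact List.getElem_append_right h

def glidx (i : Fin μ.length) : Fin (μ ++ ν).length :=
  ⟨i.1, by rw [List.length_append]; omega⟩

def gridx (j : Fin ν.length) : Fin (μ ++ ν).length :=
  ⟨μ.length + j.1, by rw [List.length_append]; omega⟩

lemma glget (i : Fin μ.length) : μ.get i = (μ ++ ν).get (glidx μ ν i) :=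
  (get_app_left μ ν i.1 i.2 _).symm

lemma grget (j : Fin ν.length) : ν.get j = (μ ++ ν).get (gridx μ ν j) := by
  unfold gridx
  rw [get_app_right μ ν (μ.length + j.1) (Nat.le_add_right _ _)
    (by rw [List.length_append]; omega) (by have := j.2; omega)]
  congr 1
  apply Fin.ext
  simp

def gmap : CycIdx μ ⊕ CycIdx ν → CycIdx (μ ++ ν)
  | Sum.inl ⟨i, x⟩ => ⟨glidx μ ν i, Fin.cast (glget μ ν i) x⟩
  | Sum.inr ⟨j, y⟩ => ⟨gridx μ ν j, Fin.cast (grget μ ν j) y⟩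

lemma cyc_ext {ρ : List ℕ} {p q : CycIdx ρ} (h1 : (p.1 : ℕ) = (q.1 : ℕ))
    (h2 : (p.2 : ℕ) = (q.2 : ℕ)) : p = q := by
  obtain ⟨⟨i, hi⟩, x⟩ := p
  obtain ⟨⟨i', hi'⟩, x'⟩ := q
  dsimp at h1 h2
  subst h1
  exact congrArg (Sigma.mk _) (Fin.ext h2)

lemma gmap_injective : Function.Injective (gmap μ ν) := by
  rintro (⟨i, x⟩ | ⟨j, y⟩) (⟨i', x'⟩ | ⟨j', y'⟩) h <;>
      have h1 := congrArg (fun p : CycIdx (μ ++ ν) => (p.1 : ℕ)) h <;>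
      have h2 := congrArg (fun p : CycIdx (μ ++ ν) => (p.2 : ℕ)) h <;>
      simp only [gmap, glidx, gridx, Fin.coe_cast] at h1 h2
  · exact congrArg Sum.inl (cyc_ext h1 h2)
  · exact absurd h1 (by have := i.2; omega)
  · exact absurd h1 (by have := i'.2; omega)
  · refine congrArg Sum.inr (cyc_ext ?_ h2)
    show (j : ℕ) = (j' : ℕ)
    omega

lemma gmap_surjective : Function.Surjective (gmap μ ν) := by
  rintro ⟨⟨v, hv⟩, x⟩
  by_cases hvμ : v < μ.length
  · refine ⟨Sum.inl ⟨⟨v, hvμ⟩, Fin.cast (glget μ ν ⟨v, hvμ⟩).symm x⟩, ?_⟩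
    refine cyc_ext rfl ?_
    simp [gmap]
    rfl
  · have hv' : v - μ.length < ν.length := by
      have := hv; rw [List.length_append] at this; omega
    have hty : (μ ++ ν).get ⟨v, hv⟩ = ν.get ⟨v - μ.length, hv'⟩ :=
      get_app_right μ ν v (by omega) hv hv'
    refine ⟨Sum.inr ⟨⟨v - μ.length, hv'⟩, Fin.cast hty x⟩, ?_⟩
    refine cyc_ext ?_ ?_
    · simp only [gmap, gridx]
      omega
    · simp [gmap]

lemma cast_finRotate {k k' : ℕ} (h : k = k') (x : Fin k) :
    Fin.cast h (finRotate k x) = finRotate k' (Fin.cast h x) := by subst h; rfl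

lemma gmap_comm (s : CycIdx μ ⊕ CycIdx ν) :
    gmap μ ν (Equiv.sumCongr (rotL μ) (rotL ν) s) = rotL (μ ++ ν) (gmap μ ν s) := by
  rcases s with ⟨i, x⟩ | ⟨j, y⟩
  · exact congrArg (Sigma.mk (glidx μ ν i)) (cast_finRotate (glget μ ν i) x)
  · exact congrArg (Sigma.mk (gridx μ ν j)) (cast_finRotate (grget μ ν j) y)

lemma symm_comm {α β : Type*} (E : α ≃ β) (σ : Equiv.Perm α) (τ : Equiv.Perm β)
    (h : ∀ s, E (σ s) = τ (E s)) (x : β) : E.symm (τ x) = σ (E.symm x) := by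
  apply E.injective
  rw [Equiv.apply_symm_apply, h, Equiv.apply_symm_apply]

lemma SigmaL_append (n : ℕ) : SigmaL n (μ ++ ν)
    = SigmaP n (CycIdx μ ⊕ CycIdx ν) (Equiv.sumCongr (rotL μ) (rotL ν)) := by
  rw [SigmaL_eq]
  exact SigmaP_congr _ _
    (Equiv.ofBijective (gmap μ ν) ⟨gmap_injective μ ν, gmap_surjective μ ν⟩).symm
    (symm_comm _ _ _ (gmap_comm μ ν))

end Append

section Empty

variable {μ ν : List ℕ}

lemma empty_matching : IsMatching (∅ : Finset (CycIdx μ × CycIdx ν)) :=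
  fun p hp => absurd hp (Finset.notMem_empty p)

def e0 : (CycIdx μ ⊕ CycIdx ν) ≃ QM (∅ : Finset (CycIdx μ × CycIdx ν)) where
  toFun := Sum.map id (fun q => ⟨q, fun _ => Finset.notMem_empty _⟩)
  invFun := Sum.map id Subtype.val
  left_inv := by rintro (p | q) <;> rfl
  right_inv := by rintro (p | ⟨q, hq⟩) <;> rfl

lemma e0_comm (s : CycIdx μ ⊕ CycIdx ν) :
    e0 (Equiv.sumCongr (rotL μ) (rotL ν) s)
      = piM (empty_matching (μ := μ) (ν := ν)) (e0 s) := by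
  have hjm : ∀ q : CycIdx ν, (jemb (empty_matching (μ := μ) (ν := ν))) q
      = Sum.inr ⟨q, fun _ => Finset.notMem_empty _⟩ := fun q => jmap_spec₂ _
  rcases s with p | q
  · have h1 : ((rotL ν).viaEmbedding (jemb (empty_matching (μ := μ) (ν := ν))))
        (Sum.inl p) = Sum.inl p :=
      Equiv.Perm.viaEmbedding_apply_of_notMem _ _ _
        (by rintro ⟨q, hq⟩; rw [hjm q] at hq; exact Sum.inr_ne_inl hq)
    have h2 : ((rotL μ).viaEmbedding (inlE (∅ : Finset (CycIdx μ × CycIdx ν))))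
        (Sum.inl p) = Sum.inl (rotL μ p) :=
      Equiv.Perm.viaEmbedding_apply (rotL μ) (inlE ∅) p
    exact ((congrArg (⇑((rotL μ).viaEmbedding (inlE (∅ : Finset (CycIdx μ × CycIdx ν)))))
      h1).trans h2).symm
  · have h1 : ((rotL ν).viaEmbedding (jemb (empty_matching (μ := μ) (ν := ν))))
        (Sum.inr ⟨q, fun _ => Finset.notMem_empty _⟩)
          = Sum.inr ⟨rotL ν q, fun _ => Finset.notMem_empty _⟩ := by
      rw [← hjm q, Equiv.Perm.viaEmbedding_apply, hjm]
    have h2 : ((rotL μ).viaEmbedding (inlE (∅ : Finset (CycIdx μ × CycIdx ν))))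
        (Sum.inr ⟨rotL ν q, fun _ => Finset.notMem_empty _⟩)
          = Sum.inr ⟨rotL ν q, fun _ => Finset.notMem_empty _⟩ :=
      Equiv.Perm.viaEmbedding_apply_of_notMem _ _ _
        (by rintro ⟨p, hp⟩; exact Sum.inl_ne_inr hp)
    exact ((congrArg (⇑((rotL μ).viaEmbedding (inlE (∅ : Finset (CycIdx μ × CycIdx ν)))))
      h1).trans h2).symm

set_option maxHeartbeats 1000000 in
lemma SigmaL_append_eq (n : ℕ) :
    SigmaL n (μ ++ ν) = SigmaL n (rhoOf (⟨∅, empty_matching⟩ : TM μ ν)) := by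
  rw [SigmaL_append, ← rhoOf_SigmaP (⟨∅, empty_matching⟩ : TM μ ν) n]
  exact SigmaP_congr _ _ e0 e0_comm

end Empty

end Stmt8

set_option maxHeartbeats 1000000 in
/-- In the center of `ℂ S_n`: `Σ_μ · Σ_ν = ∑_M Σ_{ρ(M)}`, the sum running over all partial
matchings `M` between the entry indices of the cycles of `μ` and those of `ν`, where
`ρ(M)` is a composition depending only on `M` with `|ρ(M)| = |μ| + |ν| - |M|`.
In particular `Σ_μ · Σ_ν = Σ_{μ∪ν} + ∑_{|ρ| < |μ|+|ν|} c^ρ_{μν} Σ_ρ` with nonnegative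
integer coefficients `c^ρ_{μν}`. -/
theorem stmt_8 (n : ℕ) (μ ν : List ℕ) :
    (∃ ρof : {M : Finset (CycIdx μ × CycIdx ν) // IsMatching M} → List ℕ,
      (∀ M, (ρof M).sum = μ.sum + ν.sum - (M : Finset (CycIdx μ × CycIdx ν)).card) ∧
      SigmaL n μ * SigmaL n ν
        = ∑ M : {M : Finset (CycIdx μ × CycIdx ν) // IsMatching M}, SigmaL n (ρof M))
    ∧ (∃ (S : Finset (List ℕ)) (c : List ℕ → ℕ),
      (∀ ρ ∈ S, ρ.sum < μ.sum + ν.sum) ∧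
      SigmaL n μ * SigmaL n ν
        = SigmaL n (μ ++ ν) + ∑ ρ ∈ S, (c ρ : ℂ) • SigmaL n ρ) := by
  classical
  have key : SigmaL n μ * SigmaL n ν = ∑ M : Stmt8.TM μ ν, SigmaL n (Stmt8.rhoOf M) := by
    rw [Stmt8.SigmaL_eq n μ, Stmt8.SigmaL_eq n ν, Stmt8.prod_eq_sum_matchings]
    exact Finset.sum_congr rfl (fun M _ => Stmt8.rhoOf_SigmaP M n)
  constructor
  · exact ⟨Stmt8.rhoOf, fun M => Stmt8.rhoOf_sum M, key⟩
  · set M₀ : Stmt8.TM μ ν := ⟨∅, Stmt8.empty_matching⟩ with hM₀def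
    refine ⟨(Finset.univ.erase M₀).image (fun M => Stmt8.rhoOf M),
      fun ρ => ((Finset.univ.erase M₀).filter (fun M => Stmt8.rhoOf M = ρ)).card, ?_, ?_⟩
    · intro ρ hρ
      obtain ⟨M, hM, rfl⟩ := Finset.mem_image.mp hρ
      have hne : M ≠ M₀ := (Finset.mem_erase.mp hM).1
      have hMne : M.1.Nonempty := by
        rw [Finset.nonempty_iff_ne_empty]
        intro h
        exact hne (Subtype.ext h)
      obtain ⟨⟨p, q⟩, hpq⟩ := hMne
      have hcard : 1 ≤ M.1.card := Finset.card_pos.mpr ⟨_, hpq⟩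
      have hμ : 0 < μ.sum := by
        have : 0 < Fintype.card (CycIdx μ) := Fintype.card_pos_iff.mpr ⟨p⟩
        rwa [Stmt8.card_CycIdx] at this
      rw [Stmt8.rhoOf_sum]
      have hle := (Stmt8.card_facts M.2).1
      rw [Stmt8.card_CycIdx] at hle
      omega
    · rw [key, ← Finset.add_sum_erase _ _ (Finset.mem_univ M₀),
        Stmt8.SigmaL_append_eq n]
      congr 1
      rw [Finset.sum_comp (fun ρ => SigmaL n ρ) (fun M : Stmt8.TM μ ν => Stmt8.rhoOf M)]
      apply Finset.sum_congr rfl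
      intro ρ _
      rw [Nat.cast_smul_eq_nsmul]
end

section
/- The change of basis between q-characters and ordinary characters is triangular and explicitly given by: (q-1)^{ℓ(ρ)} Σ_{ρ,q} = ∑_{ν⊢k} ((q^ν - 1)/z_ν) ⟨p_ν, h_ρ⟩ Σ_ν and conversely (q^ρ - 1) Σ_ρ = ∑_{ν⊢k} (q-1)^{ℓ(ν)} ⟨m_ν, p_ρ⟩ Σ_{ν,q}, where these two linear relations are inverse to each other; equivalently, the two transition matrices A_{ρν} = (q^ν-1)⟨p_ν,h_ρ⟩/(z_ν (q-1)^{ℓ(ρ)}) and B_{ρν} = (q-1)^{ℓ(ν)}⟨m_ν,p_ρ⟩/(q^ρ-1) over partitions of k are mutually inverse. -/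
open scoped BigOperators

/-- `z_μ = ∏_i i^{m_i} m_i!`. -/
noncomputable def zMul (m : Multiset ℕ) : ℝ :=
  (m.map fun i => (i : ℝ)).prod * ∏ i ∈ m.toFinset, (Nat.factorial (m.count i) : ℝ)

/-- The change of basis between the `q`-characters `Σ_{ρ,q}` and the ordinary characters
`Σ_ν` is given by the two mutually inverse matrices
`A ρ ν = (q^ν - 1) ⟨p_ν, h_ρ⟩ / (z_ν (q-1)^{ℓ(ρ)})` and
`B ρ ν = (q-1)^{ℓ(ν)} ⟨m_ν, p_ρ⟩ / (q^ρ - 1)`.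
The Hall scalar product on the degree-`k` symmetric functions is axiomatized: `V` is the
space of degree-`k` symmetric functions, `Bil` a symmetric bilinear form for which the
power sums `p` form an orthogonal basis with `⟨p_ν, p_ν⟩ = z_ν`, and the complete and
monomial families `h`, `m` are dual: `⟨h_μ, m_ν⟩ = δ_{μν}`.  `q` is a real which is not a
root of unity (`q^m ≠ 1` for all `m ≥ 1`). -/
theorem stmt_13 (k : ℕ) (hk : 1 ≤ k) (q : ℝ) (hq : ∀ j : ℕ, 1 ≤ j → q ^ j ≠ 1)
    (V : Type) [AddCommGroup V] [Module ℝ V]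
    (Bil : V →ₗ[ℝ] V →ₗ[ℝ] ℝ) (hsymm : ∀ x y, Bil x y = Bil y x)
    (p h m : Nat.Partition k → V)
    (bp : Module.Basis (Nat.Partition k) ℝ V) (hbp : ∀ ρ, bp ρ = p ρ)
    (hpp : ∀ μ ν, Bil (p μ) (p ν) = if μ = ν then zMul μ.parts else 0)
    (hhm : ∀ μ ν, Bil (h μ) (m ν) = if μ = ν then 1 else 0)
    (A B : Matrix (Nat.Partition k) (Nat.Partition k) ℝ)
    (hA : ∀ ρ ν, A ρ ν = ((ν.parts.map fun i => q ^ i - 1).prod) * Bil (p ν) (h ρ) /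
      (zMul ν.parts * (q - 1) ^ (Multiset.card ρ.parts)))
    (hB : ∀ ρ ν, B ρ ν = (q - 1) ^ (Multiset.card ν.parts) * Bil (m ν) (p ρ) /
      ((ρ.parts.map fun i => q ^ i - 1).prod)) :
    A * B = 1 ∧ B * A = 1 := by
  classical
  have hq1 : q - 1 ≠ 0 := by
    have := hq 1 le_rfl
    simpa [sub_eq_zero] using this
  have hz : ∀ ν : Nat.Partition k, zMul ν.parts ≠ 0 := by
    intro ν
    unfold zMul
    apply mul_ne_zero
    · apply Multiset.prod_ne_zero
      intro h0
      simp at h0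
      exact absurd (ν.parts_pos h0) (lt_irrefl 0)
    · apply Finset.prod_ne_zero_iff.mpr
      intro i _
      exact_mod_cast (Nat.factorial_pos _).ne'
  have hQ : ∀ ν : Nat.Partition k, (ν.parts.map fun i => q ^ i - 1).prod ≠ 0 := by
    intro ν
    apply Multiset.prod_ne_zero
    intro h0
    obtain ⟨i, hi, hi0⟩ := Multiset.mem_map.mp h0
    exact hq i (ν.parts_pos hi) (by linarith [sub_eq_zero.mp hi0])
  -- Bil (p ν) (h ρ) equals the `ν`-coordinate of `h ρ` times `z_ν`
  have hrep : ∀ (ρ ν : Nat.Partition k),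
      Bil (p ν) (h ρ) = bp.repr (h ρ) ν * zMul ν.parts := by
    intro ρ ν
    conv_lhs => rw [← bp.sum_repr (h ρ)]
    rw [map_sum]
    have : ∀ μ : Nat.Partition k,
        Bil (p ν) (bp.repr (h ρ) μ • bp μ) =
          if ν = μ then bp.repr (h ρ) μ * zMul ν.parts else 0 := by
      intro μ
      rw [map_smul, hbp, hpp]
      by_cases hμ : ν = μ <;> simp [hμ, smul_eq_mul, mul_comm]
    rw [Finset.sum_congr rfl fun μ _ => this μ]
    simp
  -- key duality identity
  have key : ∀ ρ σ : Nat.Partition k,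
      ∑ ν : Nat.Partition k, bp.repr (h ρ) ν * Bil (m σ) (p ν) =
        if σ = ρ then 1 else 0 := by
    intro ρ σ
    have : Bil (m σ) (h ρ) = if σ = ρ then 1 else 0 := by
      rw [hsymm, hhm]
      by_cases hh : ρ = σ <;> simp [hh, eq_comm]
    rw [← this]
    conv_rhs => rw [← bp.sum_repr (h ρ)]
    rw [map_sum]
    refine Finset.sum_congr rfl fun ν _ => ?_
    rw [map_smul, hbp, smul_eq_mul]
  have hAB : A * B = 1 := by
    ext ρ σ
    rw [Matrix.mul_apply, Matrix.one_apply]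
    have hterm : ∀ ν : Nat.Partition k,
        A ρ ν * B ν σ =
          ((q - 1) ^ (Multiset.card σ.parts) / (q - 1) ^ (Multiset.card ρ.parts)) *
            (bp.repr (h ρ) ν * Bil (m σ) (p ν)) := by
      intro ν
      rw [hA, hB, hrep, div_mul_div_comm, div_mul_eq_mul_div,
        div_eq_div_iff (mul_ne_zero (mul_ne_zero (hz ν) (pow_ne_zero _ hq1)) (hQ ν))
          (pow_ne_zero _ hq1)]
      ring
    rw [Finset.sum_congr rfl fun ν _ => hterm ν, ← Finset.mul_sum, key]
    by_cases hh : ρ = σ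
    · subst hh
      simp [div_self (pow_ne_zero _ hq1)]
    · simp [hh, Ne.symm hh]
  exact ⟨hAB, mul_eq_one_comm.mp hAB⟩
end

section
/- For a sequence of random Young diagrams λ^{(n)} of size n distributed according to the q-Plancherel measure with fixed 0 < q < 1: if for every k ≥ 1 the normalized power sums p_k(λ^{(n)})/n^k converge in probability to (1-q)^k/(1-q^k), then for every i ≥ 1 the normalized row lengths λ_i^{(n)}/n converge in probability to (1-q)q^{i-1}. -/
open scoped BigOperators
open Filter

/-- The diagonal length of a Young diagram. -/
def diagLen (μ : YoungDiagram) : ℕ :=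
  ((Finset.range (μ.card + 1)).filter fun i => (i, i) ∈ μ).card

/-- The power sum `p_k(λ) = ∑_{i=1}^d (a_i^*)^k - (-b_i^*)^k` of the modified Frobenius
coordinates `a_i^* = λ_i - i + 1/2`, `b_i^* = λ'_i - i + 1/2` (0-indexed below). -/
noncomputable def pObs (k : ℕ) (μ : YoungDiagram) : ℝ :=
  ∑ i ∈ Finset.range (diagLen μ),
    (((μ.rowLen i : ℝ) - i - 1/2) ^ k - (-((μ.colLen i : ℝ) - i - 1/2)) ^ k)


section Lemmas

open YoungDiagram Set

variable {μ : YoungDiagram}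

lemma rowLen_pos_of_diag (h : (i, i) ∈ μ) : i < μ.rowLen i := mem_iff_lt_rowLen.mp h

/-- sum of first m row lengths is at most card -/
lemma sum_rowLen_le (μ : YoungDiagram) (m : ℕ) :
    ∑ j ∈ Finset.range m, μ.rowLen j ≤ μ.card := by
  classical
  have hdisj : ∀ x ∈ Finset.range m, ∀ y ∈ Finset.range m, x ≠ y →
      Disjoint (μ.row x) (μ.row y) := by
    intro x _ y _ hxy
    rw [Finset.disjoint_left]
    intro c hcx hcy
    rw [mem_row_iff] at hcx hcy
    exact hxy (hcx.2 ▸ hcy.2.symm ▸ rfl)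
  calc ∑ j ∈ Finset.range m, μ.rowLen j
      = ∑ j ∈ Finset.range m, (μ.row j).card := by
        refine Finset.sum_congr rfl fun j _ => μ.rowLen_eq_card
    _ = ((Finset.range m).biUnion μ.row).card := (Finset.card_biUnion hdisj).symm
    _ ≤ μ.cells.card := by
        apply Finset.card_le_card
        intro c hc
        rw [Finset.mem_biUnion] at hc
        obtain ⟨j, -, hc⟩ := hc
        exact (mem_row_iff.mp hc).1
    _ = μ.card := rfl

lemma rowLen_le_card (μ : YoungDiagram) (j : ℕ) : μ.rowLen j ≤ μ.card := by
  have := sum_rowLen_le μ (j+1)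
  have h2 : μ.rowLen j ≤ ∑ t ∈ Finset.range (j+1), μ.rowLen t :=
    Finset.single_le_sum (fun t _ => Nat.zero_le _) (Finset.self_mem_range_succ j)
  omega

lemma mem_of_lt_diagLen (h : i < diagLen μ) : (i, i) ∈ μ := by
  by_contra hmem
  have hsub : ((Finset.range (μ.card + 1)).filter fun j => (j, j) ∈ μ) ⊆ Finset.range i := by
    intro j hj
    rw [Finset.mem_filter] at hj
    rw [Finset.mem_range]
    by_contra hji
    push_neg at hji
    exact hmem (μ.up_left_mem hji hji hj.2)
  have := Finset.card_le_card hsub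
  rw [Finset.card_range] at this
  unfold diagLen at h
  omega

lemma lt_diagLen_of_mem (h : (i, i) ∈ μ) : i < diagLen μ := by
  have hsub : Finset.range (i+1) ⊆ ((Finset.range (μ.card + 1)).filter fun j => (j, j) ∈ μ) := by
    intro j hj
    rw [Finset.mem_range] at hj
    have hmem : (j, j) ∈ μ := μ.up_left_mem (by omega) (by omega) h
    rw [Finset.mem_filter, Finset.mem_range]
    have h5 : j < μ.rowLen j := mem_iff_lt_rowLen.mp hmem
    have h6 := rowLen_le_card μ j
    exact ⟨by omega, hmem⟩
  have := Finset.card_le_card hsub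
  rw [Finset.card_range] at this
  unfold diagLen
  omega

lemma hookLen_pos (hc : c ∈ μ.cells) : 1 ≤ hookLen μ c := by
  rw [YoungDiagram.mem_cells] at hc
  have h1 : c.2 < μ.rowLen c.1 := mem_iff_lt_rowLen.mp (by cases c; exact hc)
  have h2 : c.1 < μ.colLen c.2 := mem_iff_lt_colLen.mp (by cases c; exact hc)
  unfold hookLen
  omega

lemma qint_pos {q : ℝ} (hq0 : 0 < q) (hq1 : q < 1) {m : ℕ} (hm : 1 ≤ m) : 0 < qint q m := by
  unfold qint
  apply div_pos_of_neg_of_neg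
  · have : q ^ m < 1 := pow_lt_one₀ hq0.le hq1 (by omega)
    linarith
  · linarith

lemma qPlancherel_nonneg {q : ℝ} (hq0 : 0 < q) (hq1 : q < 1) (μ : YoungDiagram) :
    0 ≤ qPlancherel q μ := by
  unfold qPlancherel
  apply div_nonneg
  · positivity
  · exact Finset.prod_nonneg fun c hc => (qint_pos hq0 hq1 (hookLen_pos hc)).le

lemma finite_card_eq (n : ℕ) : {μ : YoungDiagram | μ.card = n}.Finite := by
  have hfin : (↑((Finset.range n ×ˢ Finset.range n).powerset) : Set (Finset (ℕ × ℕ))).Finite :=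
    (Finset.range n ×ˢ Finset.range n).powerset.finite_toSet
  have hinj : Function.Injective (fun μ : YoungDiagram => μ.cells) := by
    intro a b h; cases a; cases b; simpa using h
  apply Set.Finite.subset (hfin.preimage (hinj.injOn))
  intro μ hμ
  simp only [Set.mem_preimage, Finset.coe_powerset, Set.mem_setOf_eq] at *
  rw [Set.mem_powerset_iff]
  intro c hc
  have hc' : c ∈ μ := hc
  obtain ⟨a, b⟩ := c
  have h1 : b < μ.rowLen a := mem_iff_lt_rowLen.mp hc'
  have h2 : a < μ.colLen b := mem_iff_lt_colLen.mp hc'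
  have h3 : μ.rowLen a ≤ μ.card := rowLen_le_card μ a
  have h5 : ∀ t, t ≤ a → 1 ≤ μ.rowLen t := by
    intro t ht
    have := μ.rowLen_anti t a ht
    omega
  have h6 : a + 1 ≤ ∑ t ∈ Finset.range (a+1), μ.rowLen t := by
    calc a + 1 = ∑ t ∈ Finset.range (a+1), 1 := by simp
      _ ≤ _ := Finset.sum_le_sum fun t ht => h5 t (by
          rw [Finset.mem_range] at ht; omega)
  have h7 := sum_rowLen_le μ (a+1)
  rw [Finset.mem_coe, Finset.mem_product, Finset.mem_range, Finset.mem_range]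
  omega

end Lemmas

section Part2

open Set

lemma abs_pow_sub_pow_le' {x y : ℝ} (hx : |x| ≤ 1) (hy : |y| ≤ 1) (k : ℕ) :
    |x ^ k - y ^ k| ≤ k * |x - y| := by
  induction k with
  | zero => simp
  | succ k ih =>
    have heq : x^(k+1) - y^(k+1) = x^k * (x - y) + y * (x^k - y^k) := by ring
    rw [heq]
    have h1 : |x|^k ≤ 1 := pow_le_one₀ (abs_nonneg x) hx
    calc |x^k*(x-y) + y*(x^k - y^k)| ≤ |x^k*(x-y)| + |y*(x^k-y^k)| := abs_add_le _ _
      _ = |x|^k * |x-y| + |y| * |x^k - y^k| := by rw [abs_mul, abs_mul, abs_pow]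
      _ ≤ 1 * |x-y| + 1 * ((k:ℝ) * |x-y|) := by
          apply add_le_add
          · exact mul_le_mul_of_nonneg_right h1 (abs_nonneg _)
          · exact mul_le_mul hy ih (abs_nonneg _) one_pos.le
      _ = ((k:ℕ)+1 : ℝ) * |x-y| := by ring
      _ = ((k+1 : ℕ) : ℝ) * |x-y| := by push_cast; ring

lemma Tk_eq {q : ℝ} (hq0 : 0 < q) (hq1 : q < 1) (i k : ℕ) (hk : 1 ≤ k) :
    (1-q)^k/(1-q^k) - ∑ j ∈ Finset.range i, ((1-q)*q^j)^k = ((1-q)*q^i)^k / (1-q^k) := by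
  have hqk : q^k < 1 := pow_lt_one₀ hq0.le hq1 (by omega)
  have h1 : (1:ℝ) - q^k ≠ 0 := by linarith
  have hne : (q:ℝ)^k ≠ 1 := by linarith
  have hpow : ∀ j, ((1-q)*q^j)^k = (1-q)^k * (q^k)^j := by
    intro j
    rw [mul_pow, ← pow_mul, ← pow_mul, Nat.mul_comm]
  rw [Finset.sum_congr rfl (fun j _ => hpow j), ← Finset.mul_sum, geom_sum_eq hne i, hpow i]
  have h2 : (q:ℝ)^k - 1 ≠ 0 := by intro h; apply hne; linarith
  field_simp
  ring

lemma prob_nonneg {q : ℝ} (hq0 : 0 < q) (hq1 : q < 1) (S : Set YoungDiagram) :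
    0 ≤ ∑' μ : S, qPlancherel q (μ : YoungDiagram) :=
  tsum_nonneg fun μ => qPlancherel_nonneg hq0 hq1 _

lemma prob_le_sum {q : ℝ} (hq0 : 0 < q) (hq1 : q < 1) {n : ℕ} {S : Set YoungDiagram}
    {ι : Type} (F : Finset ι) (T : ι → Set YoungDiagram)
    (hS : S ⊆ {μ | μ.card = n}) (hT : ∀ k ∈ F, T k ⊆ {μ | μ.card = n})
    (hsub : ∀ μ ∈ S, ∃ k ∈ F, μ ∈ T k) :
    (∑' μ : S, qPlancherel q (μ : YoungDiagram)) ≤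
      ∑ k ∈ F, ∑' μ : T k, qPlancherel q (μ : YoungDiagram) := by
  classical
  set f := qPlancherel q with hf
  have hfnn : ∀ μ, 0 ≤ f μ := qPlancherel_nonneg hq0 hq1
  have hfin := finite_card_eq n
  have hsummS : Summable (S.indicator f) :=
    summable_of_finite_support ((hfin.subset hS).subset support_indicator_subset)
  have hsummT : ∀ k ∈ F, Summable ((T k).indicator f) := fun k hk =>
    summable_of_finite_support ((hfin.subset (hT k hk)).subset support_indicator_subset)
  have hsummR : Summable (fun μ => ∑ k ∈ F, (T k).indicator f μ) :=
    summable_sum fun k hk => hsummT k hk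
  have hpt : ∀ μ, S.indicator f μ ≤ ∑ k ∈ F, (T k).indicator f μ := by
    intro μ
    by_cases hμ : μ ∈ S
    · obtain ⟨k, hk, hμT⟩ := hsub μ hμ
      rw [indicator_of_mem hμ]
      calc f μ = (T k).indicator f μ := (indicator_of_mem hμT f).symm
        _ ≤ _ := Finset.single_le_sum
            (f := fun k => (T k).indicator f μ)
            (fun j _ => indicator_nonneg (fun x _ => hfnn x) μ) hk
    · rw [indicator_of_notMem hμ]
      exact Finset.sum_nonneg fun j _ => indicator_nonneg (fun x _ => hfnn x) μ
  calc (∑' μ : S, f μ) = ∑' μ, S.indicator f μ := tsum_subtype S f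
    _ ≤ ∑' μ, ∑ k ∈ F, (T k).indicator f μ := Summable.tsum_le_tsum hpt hsummS hsummR
    _ = ∑ k ∈ F, ∑' μ, (T k).indicator f μ := Summable.tsum_finsetSum fun k hk => hsummT k hk
    _ = ∑ k ∈ F, ∑' μ : T k, f μ := by
        refine Finset.sum_congr rfl fun k hk => ?_
        exact (tsum_subtype (T k) f).symm

end Part2

section MainLemma

noncomputable def cq (q : ℝ) (j : ℕ) : ℝ := (1-q) * q^j
noncomputable def Aco (μ : YoungDiagram) (j : ℕ) : ℝ := (μ.rowLen j : ℝ) - j - 1/2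
noncomputable def Bco (μ : YoungDiagram) (j : ℕ) : ℝ := (μ.colLen j : ℝ) - j - 1/2

lemma cq_pos {q : ℝ} (hq0 : 0 < q) (hq1 : q < 1) (j : ℕ) : 0 < cq q j := by
  unfold cq
  have : 0 < 1 - q := by linarith
  positivity

lemma cq_lt_one {q : ℝ} (hq0 : 0 < q) (hq1 : q < 1) (j : ℕ) : cq q j < 1 := by
  unfold cq
  have h1 : q ^ j ≤ 1 := pow_le_one₀ hq0.le hq1.le
  nlinarith

lemma pObs_eq (k : ℕ) (μ : YoungDiagram) :
    pObs k μ = ∑ j ∈ Finset.range (diagLen μ), ((Aco μ j) ^ k - (-(Bco μ j)) ^ k) := rfl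

lemma Aco_pos {μ : YoungDiagram} {j : ℕ} (hj : j < diagLen μ) : 1/2 ≤ Aco μ j := by
  have h := rowLen_pos_of_diag (mem_of_lt_diagLen hj)
  unfold Aco
  have : (j:ℝ) + 1 ≤ μ.rowLen j := by exact_mod_cast h
  linarith

lemma Bco_pos {μ : YoungDiagram} {j : ℕ} (hj : j < diagLen μ) : 1/2 ≤ Bco μ j := by
  have h := YoungDiagram.mem_iff_lt_colLen.mp (mem_of_lt_diagLen hj)
  unfold Bco
  have : (j:ℝ) + 1 ≤ μ.colLen j := by exact_mod_cast h
  linarith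

lemma Aco_le_card (μ : YoungDiagram) (j : ℕ) : Aco μ j ≤ μ.card := by
  have h := rowLen_le_card μ j
  unfold Aco
  have : (μ.rowLen j : ℝ) ≤ μ.card := by exact_mod_cast h
  have : (0:ℝ) ≤ j := Nat.cast_nonneg j
  linarith

lemma Aco_anti (μ : YoungDiagram) {j j' : ℕ} (h : j ≤ j') : Aco μ j' ≤ Aco μ j := by
  have hr := μ.rowLen_anti j j' h
  unfold Aco
  have h1 : (μ.rowLen j' : ℝ) ≤ μ.rowLen j := by exact_mod_cast hr
  have h2 : (j:ℝ) ≤ j' := by exact_mod_cast h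
  linarith

lemma sum_Aco_le (μ : YoungDiagram) (m : ℕ) :
    ∑ j ∈ Finset.range m, Aco μ j ≤ μ.card := by
  have h := sum_rowLen_le μ m
  have h1 : (∑ j ∈ Finset.range m, (μ.rowLen j : ℝ)) ≤ μ.card := by exact_mod_cast h
  refine le_trans (Finset.sum_le_sum fun j _ => ?_) h1
  unfold Aco
  have : (0:ℝ) ≤ j := Nat.cast_nonneg j
  linarith

end MainLemma

set_option maxHeartbeats 2000000 in
lemma lemmaD {q : ℝ} (hq0 : 0 < q) (hq1 : q < 1) :
    ∀ (i : ℕ) (ε : ℝ), 0 < ε → ∃ (K : ℕ) (δ : ℝ) (N : ℕ), 0 < δ ∧ 1 ≤ N ∧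
      ∀ n : ℕ, N ≤ n → ∀ μ : YoungDiagram, μ.card = n →
        (∀ k, 1 ≤ k → k ≤ K → |pObs k μ / (n:ℝ)^k - (1-q)^k/(1-q^k)| ≤ δ) →
        ∀ j, j < i → (j, j) ∈ μ ∧ |Aco μ j / n - cq q j| < ε := by
  intro i
  induction i with
  | zero =>
    intro ε hε
    exact ⟨1, 1, 1, one_pos, le_refl 1, fun n hn μ hμ hmom j hj => absurd hj (Nat.not_lt_zero j)⟩
  | succ i IH =>
    intro ε hε
    set c : ℝ := cq q i with hc_def
    have hc0 : 0 < c := cq_pos hq0 hq1 i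
    have hc1 : c < 1 := cq_lt_one hq0 hq1 i
    -- choose k1 = k1' + 1 even
    set r : ℝ := max (c - ε) 0 with hr_def
    have hr0 : 0 ≤ r := le_max_right _ _
    have hrc : r < c := max_lt (by linarith) hc0
    have hρ1 : r / c < 1 := (div_lt_one hc0).mpr hrc
    have hρ0 : 0 ≤ r / c := div_nonneg hr0 hc0.le
    have htρ : Filter.Tendsto (fun k : ℕ => (r/c)^k) atTop (nhds 0) :=
      tendsto_pow_atTop_nhds_zero_of_lt_one hρ0 hρ1
    have hev1 : ∀ᶠ k : ℕ in atTop, (r/c)^k < c/2 :=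
      htρ.eventually_lt_const (by positivity)
    obtain ⟨K₁, hK₁⟩ := Filter.eventually_atTop.mp hev1
    set k1' : ℕ := 2*K₁+1 with hk1'_def
    set k1 : ℕ := k1' + 1 with hk1_def
    have hk1even : Even k1 := ⟨K₁+1, by omega⟩
    have hstep1 : r ^ k1' < c ^ k1 / 2 := by
      have h := hK₁ k1' (by omega)
      rw [div_pow, div_lt_iff₀ (by positivity)] at h
      calc r ^ k1' < c/2 * c ^ k1' := h
        _ = c ^ k1 / 2 := by rw [hk1_def, pow_succ]; ring
    -- choose k2 = 2*K₂+1 odd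
    have hσ1 : c / (c + ε) < 1 := (div_lt_one (by linarith)).mpr (by linarith)
    have hσ0 : 0 ≤ c / (c + ε) := by positivity
    have hev2 : ∀ᶠ k : ℕ in atTop, (c/(c+ε))^k < 1/4 :=
      (tendsto_pow_atTop_nhds_zero_of_lt_one hσ0 hσ1).eventually_lt_const (by norm_num)
    have hev3 : ∀ᶠ k : ℕ in atTop, q^k < 1/2 :=
      (tendsto_pow_atTop_nhds_zero_of_lt_one hq0.le hq1).eventually_lt_const (by norm_num)
    obtain ⟨K₂, hK₂⟩ := Filter.eventually_atTop.mp (hev2.and hev3)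
    set k2 : ℕ := 2*K₂+1 with hk2_def
    have hk2odd : Odd k2 := ⟨K₂, by omega⟩
    have hq2 : q ^ k2 < 1/2 := (hK₂ k2 (by omega)).2
    have hstep2 : c ^ k2 / (1 - q ^ k2) < (c + ε) ^ k2 / 2 := by
      have h := (hK₂ k2 (by omega)).1
      rw [div_pow, div_lt_iff₀ (by positivity)] at h
      rw [div_lt_div_iff₀ (by linarith) (by norm_num)]
      have hle : (1:ℝ)/4 * (c+ε)^k2 * 2 ≤ (c+ε)^k2 * (1 - q^k2) := by
        have hpos : (0:ℝ) < (c+ε)^k2 := by positivity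
        nlinarith
      nlinarith [h, (by positivity : (0:ℝ) < (c+ε)^k2)]
    set E : ℝ := min (c^k1/2) ((c+ε)^k2/2) with hE_def
    have hE0 : 0 < E := lt_min (by positivity) (by positivity)
    set ε' : ℝ := min ε (E / (2 * (i+1) * ((max k1 k2)+1))) with hε'_def
    have hε'0 : 0 < ε' := lt_min hε (by positivity)
    have hε'ε : ε' ≤ ε := min_le_left _ _
    have herr : ∀ k : ℕ, k ≤ max k1 k2 → (i:ℝ) * k * ε' ≤ E / 2 := by
      intro k hk
      have h1 : ε' ≤ E / (2 * (i+1) * ((max k1 k2)+1)) := min_le_right _ _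
      have h2 : (i:ℝ) * k ≤ (i+1) * ((max k1 k2)+1) := by
        have : (k:ℝ) ≤ (max k1 k2 : ℕ) := by exact_mod_cast hk
        have hi : (i:ℝ) ≤ i + 1 := by linarith
        have hk0 : (0:ℝ) ≤ k := Nat.cast_nonneg k
        nlinarith [(Nat.cast_nonneg i : (0:ℝ) ≤ i)]
      calc (i:ℝ) * k * ε' ≤ ((i:ℝ)+1) * ((max k1 k2)+1) * ε' := by
            apply mul_le_mul_of_nonneg_right h2 hε'0.le
        _ ≤ ((i:ℝ)+1) * ((max k1 k2)+1) * (E / (2 * (i+1) * ((max k1 k2)+1))) := by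
            apply mul_le_mul_of_nonneg_left h1 (by positivity)
        _ = E / 2 := by field_simp
    obtain ⟨KIH, δIH, NIH, hδIH, hNIH, hIH⟩ := IH ε' hε'0
    refine ⟨max KIH (max k1 k2), min δIH (E/2), max NIH 1, lt_min hδIH (by positivity),
      le_max_right NIH 1, ?_⟩
    intro n hn μ hμ hmom
    have hn1 : 1 ≤ n := le_trans (le_max_right NIH 1) hn
    have hnR : (1:ℝ) ≤ n := by exact_mod_cast hn1
    have hnpos : (0:ℝ) < n := by linarith
    have hIHc : ∀ j, j < i → (j, j) ∈ μ ∧ |Aco μ j / n - cq q j| < ε' :=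
      hIH n (le_trans (le_max_left _ _) hn) μ hμ (fun k hka hkb =>
        le_trans (hmom k hka (le_trans hkb (le_max_left _ _))) (min_le_left _ _))
    set d := diagLen μ with hd_def
    have hdi : i ≤ d := by
      by_contra h
      push_neg at h
      exact absurd (lt_diagLen_of_mem (hIHc d h).1) (lt_irrefl d)
    set x : ℕ → ℝ := fun j => Aco μ j / n with hx_def
    set y : ℕ → ℝ := fun j => Bco μ j / n with hy_def
    have hx_pos : ∀ j, j < d → 0 < x j := fun j hj =>
      div_pos (lt_of_lt_of_le (by norm_num) (Aco_pos hj)) hnpos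
    have hx_le1 : ∀ j, j < d → x j ≤ 1 := by
      intro j hj
      rw [hx_def]
      rw [div_le_one hnpos]
      calc Aco μ j ≤ (μ.card : ℝ) := Aco_le_card μ j
        _ = n := by exact_mod_cast congrArg (Nat.cast (R := ℝ)) hμ
    have hy_pos : ∀ j, j < d → 0 ≤ y j := fun j hj =>
      div_nonneg (le_trans (by norm_num) (Bco_pos hj)) hnpos.le
    have hx_anti : ∀ j j', j ≤ j' → x j' ≤ x j := by
      intro j j' h
      rw [hx_def]
      simp only
      exact div_le_div_of_nonneg_right (Aco_anti μ h) hnpos.le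
    have hsum_x : ∑ j ∈ Finset.range d, x j ≤ 1 := by
      rw [hx_def]
      simp only
      rw [← Finset.sum_div, div_le_one hnpos]
      calc ∑ j ∈ Finset.range d, Aco μ j ≤ (μ.card : ℝ) := sum_Aco_le μ d
        _ = n := by exact_mod_cast congrArg (Nat.cast (R := ℝ)) hμ
    have hmom_eq : ∀ k : ℕ, pObs k μ / (n:ℝ)^k
        = ∑ j ∈ Finset.range d, ((x j)^k - (-(y j))^k) := by
      intro k
      rw [pObs_eq, Finset.sum_div]
      refine Finset.sum_congr rfl fun j _ => ?_
      rw [hx_def, hy_def]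
      simp only
      rw [sub_div, ← div_pow, ← neg_div, ← div_pow]
    have herrS : ∀ k : ℕ,
        |∑ j ∈ Finset.range i, (x j)^k - ∑ j ∈ Finset.range i, (cq q j)^k|
          ≤ (i:ℝ) * k * ε' := by
      intro k
      rw [← Finset.sum_sub_distrib]
      calc |∑ j ∈ Finset.range i, ((x j)^k - (cq q j)^k)|
          ≤ ∑ j ∈ Finset.range i, |(x j)^k - (cq q j)^k| := Finset.abs_sum_le_sum_abs _ _
        _ ≤ ∑ _j ∈ Finset.range i, (k:ℝ) * ε' := by
            refine Finset.sum_le_sum fun j hj => ?_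
            rw [Finset.mem_range] at hj
            have hjd : j < d := lt_of_lt_of_le hj hdi
            have h1 : |x j| ≤ 1 := abs_le.mpr ⟨by linarith [hx_pos j hjd], hx_le1 j hjd⟩
            have h2 : |cq q j| ≤ 1 := abs_le.mpr
              ⟨by linarith [cq_pos hq0 hq1 j], (cq_lt_one hq0 hq1 j).le⟩
            refine le_trans (abs_pow_sub_pow_le' h1 h2 k) ?_
            exact mul_le_mul_of_nonneg_left (le_of_lt ((hIHc j hj).2)) (Nat.cast_nonneg k)
        _ = (i:ℝ) * k * ε' := by rw [Finset.sum_const, Finset.card_range]; push_cast; ring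
    have hTkk : ∀ k, 1 ≤ k →
        (1-q)^k/(1-q^k) - ∑ j ∈ Finset.range i, (cq q j)^k = c^k / (1-q^k) := by
      intro k hk
      have h := Tk_eq hq0 hq1 i k hk
      simp only [cq, hc_def]
      exact h
    have hqk1_lt : q^k1 < 1 := pow_lt_one₀ hq0.le hq1 (by omega)
    have hqk2_lt : q^k2 < 1 := pow_lt_one₀ hq0.le hq1 (by omega)
    have hmomk1 : |pObs k1 μ / (n:ℝ)^k1 - (1-q)^k1/(1-q^k1)| ≤ E/2 :=
      le_trans (hmom k1 (by omega)
        (le_trans (le_trans (le_max_left k1 k2) (le_max_right KIH _)) le_rfl))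
        (min_le_right _ _)
    have hmomk2 : |pObs k2 μ / (n:ℝ)^k2 - (1-q)^k2/(1-q^k2)| ≤ E/2 :=
      le_trans (hmom k2 (by omega)
        (le_trans (le_trans (le_max_right k1 k2) (le_max_right KIH _)) le_rfl))
        (min_le_right _ _)
    have hpObs_k1_le : pObs k1 μ / (n:ℝ)^k1 ≤ ∑ j ∈ Finset.range d, (x j)^k1 := by
      rw [hmom_eq k1]
      refine Finset.sum_le_sum fun j hj => ?_
      rw [Finset.mem_range] at hj
      rw [hk1even.neg_pow]
      have := pow_nonneg (hy_pos j hj) k1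
      linarith
    have hck1_le : c^k1 ≤ c^k1/(1-q^k1) := by
      rw [le_div_iff₀ (by linarith : (0:ℝ) < 1 - q^k1)]
      have h1 : 0 ≤ c^k1 * q^k1 := mul_nonneg (pow_pos hc0 k1).le (pow_pos hq0 k1).le
      nlinarith
    have hEk1 : E ≤ c^k1/2 := min_le_left _ _
    have hEk2 : E ≤ (c+ε)^k2/2 := min_le_right _ _
    have herr1 := herr k1 (le_max_left k1 k2)
    have herr2 := herr k2 (le_max_right k1 k2)
    have hid : i < d := by
      rcases lt_or_eq_of_le hdi with h | h
      · exact h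
      · exfalso
        have e1 := (abs_le.mp hmomk1).1
        have e3 := (abs_le.mp (herrS k1)).2
        have e4 := hTkk k1 (by omega)
        have e5 : ∑ j ∈ Finset.range d, (x j)^k1 = ∑ j ∈ Finset.range i, (x j)^k1 := by
          rw [h]
        have := pow_pos hc0 k1
        linarith [hpObs_k1_le, hck1_le, herr1, hEk1]
    have hsplit : ∑ j ∈ Finset.range d, (x j)^k1
        = ∑ j ∈ Finset.range i, (x j)^k1 + ∑ j ∈ Finset.Ico i d, (x j)^k1 := by
      rw [Finset.range_eq_Ico, ← Finset.sum_Ico_consecutive _ (Nat.zero_le i) hdi, Finset.range_eq_Ico]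
    have htail : ∑ j ∈ Finset.Ico i d, (x j)^k1 ≤ (x i)^k1' := by
      have h1 : ∀ j ∈ Finset.Ico i d, (x j)^k1 ≤ (x i)^k1' * x j := by
        intro j hj
        rw [Finset.mem_Ico] at hj
        have hxj0 : 0 < x j := hx_pos j hj.2
        have hxji : x j ≤ x i := hx_anti i j hj.1
        calc (x j)^k1 = (x j)^k1' * x j := by rw [hk1_def, pow_succ]
          _ ≤ (x i)^k1' * x j :=
            mul_le_mul_of_nonneg_right (pow_le_pow_left₀ hxj0.le hxji k1') hxj0.le
      calc ∑ j ∈ Finset.Ico i d, (x j)^k1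
          ≤ ∑ j ∈ Finset.Ico i d, (x i)^k1' * x j := Finset.sum_le_sum h1
        _ = (x i)^k1' * ∑ j ∈ Finset.Ico i d, x j := by rw [Finset.mul_sum]
        _ ≤ (x i)^k1' * 1 := by
            refine mul_le_mul_of_nonneg_left ?_ (pow_nonneg (hx_pos i hid).le _)
            refine le_trans ?_ hsum_x
            refine Finset.sum_le_sum_of_subset_of_nonneg ?_ ?_
            · rw [Finset.range_eq_Ico]
              exact Finset.Ico_subset_Ico (Nat.zero_le i) le_rfl
            · intro j hj _
              exact (hx_pos j (Finset.mem_range.mp hj)).le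
        _ = (x i)^k1' := mul_one _
    have hxi_low : r < x i := by
      have e1 := (abs_le.mp hmomk1).1
      have e3 := (abs_le.mp (herrS k1)).2
      have e4 := hTkk k1 (by omega)
      have hxik : c^k1/2 ≤ (x i)^k1' := by
        linarith [hpObs_k1_le, htail, hsplit, hck1_le, herr1, hEk1]
      by_contra hcon
      push_neg at hcon
      have := pow_le_pow_left₀ (hx_pos i hid).le hcon k1'
      linarith [hstep1]
    have hpObs_k2_ge : ∑ j ∈ Finset.range (i+1), (x j)^k2 ≤ pObs k2 μ / (n:ℝ)^k2 := by
      rw [hmom_eq k2]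
      calc ∑ j ∈ Finset.range (i+1), (x j)^k2
          ≤ ∑ j ∈ Finset.range d, (x j)^k2 := by
            refine Finset.sum_le_sum_of_subset_of_nonneg
              (Finset.range_subset_range.mpr (by omega)) ?_
            intro j hj _
            exact pow_nonneg (hx_pos j (Finset.mem_range.mp hj)).le _
        _ ≤ ∑ j ∈ Finset.range d, ((x j)^k2 - (-(y j))^k2) := by
            refine Finset.sum_le_sum fun j hj => ?_
            rw [Finset.mem_range] at hj
            rw [hk2odd.neg_pow]
            have := pow_nonneg (hy_pos j hj) k2
            linarith
    have hxi_up : x i < c + ε := by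
      have e1 := (abs_le.mp hmomk2).2
      have e3 := (abs_le.mp (herrS k2)).1
      have e4 := hTkk k2 (by omega)
      have e5 : ∑ j ∈ Finset.range (i+1), (x j)^k2
          = ∑ j ∈ Finset.range i, (x j)^k2 + (x i)^k2 := Finset.sum_range_succ _ _
      have hfin : (x i)^k2 < (c+ε)^k2 := by
        linarith [hpObs_k2_ge, hstep2, herr2, hEk2]
      by_contra hcon
      push_neg at hcon
      have := pow_le_pow_left₀ (by linarith : (0:ℝ) ≤ c + ε) hcon k2
      linarith
    intro j hj
    rcases Nat.lt_succ_iff_lt_or_eq.mp hj with h | h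
    · exact ⟨(hIHc j h).1, lt_of_lt_of_le (hIHc j h).2 hε'ε⟩
    · subst h
      refine ⟨mem_of_lt_diagLen hid, ?_⟩
      have hxieq : Aco μ j / (n:ℝ) = x j := rfl
      rw [hxieq, abs_lt]
      constructor
      · have : c - ε ≤ r := le_max_left _ _
        rw [← hc_def]
        linarith [hxi_low]
      · rw [← hc_def]
        linarith [hxi_up]


/-- For random Young diagrams of size `n` under the `q`-Plancherel measure (`0 < q < 1`):
if for every `k ≥ 1` the normalized power sums `p_k(λ)/n^k` converge in probability to
`(1-q)^k/(1-q^k)`, then for every `i ≥ 1` the normalized row lengths `λ_i/n` converge in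
probability to `(1-q) q^(i-1)` (rows 0-indexed below via `rowLen`).  Probabilities of
events are sums of `M_{n,q}` over the diagrams of size `n` in the event. -/
theorem stmt_15 (q : ℝ) (hq0 : 0 < q) (hq1 : q < 1)
    (hyp : ∀ k : ℕ, 1 ≤ k → ∀ ε : ℝ, 0 < ε →
      Tendsto (fun n : ℕ =>
          ∑' μ : {μ : YoungDiagram // μ.card = n ∧
              ε ≤ |pObs k μ / (n : ℝ) ^ k - (1 - q) ^ k / (1 - q ^ k)|},
            qPlancherel q (μ : YoungDiagram))
        atTop (nhds 0)) :
    ∀ i : ℕ, ∀ ε : ℝ, 0 < ε →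
      Tendsto (fun n : ℕ =>
          ∑' μ : {μ : YoungDiagram // μ.card = n ∧
              ε ≤ |((μ : YoungDiagram).rowLen i : ℝ) / (n : ℝ) - (1 - q) * q ^ i|},
            qPlancherel q (μ : YoungDiagram))
        atTop (nhds 0) := by
  intro i ε hε
  obtain ⟨K, δ, N, hδ, hN1, hD⟩ := lemmaD hq0 hq1 (i+1) (ε/2) (by linarith)
  have hglue : ∀ n : ℕ, max N (Nat.ceil ((2*(i:ℝ)+1)/ε)) ≤ n →
      (∑' μ : {μ : YoungDiagram // μ.card = n ∧
          ε ≤ |((μ : YoungDiagram).rowLen i : ℝ) / (n : ℝ) - (1 - q) * q ^ i|},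
        qPlancherel q (μ : YoungDiagram))
      ≤ ∑ k ∈ Finset.Icc 1 K,
        (∑' μ : {μ : YoungDiagram // μ.card = n ∧
            δ ≤ |pObs k μ / (n : ℝ) ^ k - (1 - q) ^ k / (1 - q ^ k)|},
          qPlancherel q (μ : YoungDiagram)) := by
    intro n hn
    refine prob_le_sum hq0 hq1 (n := n) (Finset.Icc 1 K)
      (fun k => {μ : YoungDiagram | μ.card = n ∧
        δ ≤ |pObs k μ / (n : ℝ) ^ k - (1 - q) ^ k / (1 - q ^ k)|})
      (S := {μ : YoungDiagram | μ.card = n ∧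
        ε ≤ |(μ.rowLen i : ℝ) / (n : ℝ) - (1 - q) * q ^ i|})
      (fun μ hμ => hμ.1) (fun k _ μ hμ => hμ.1) ?_
    intro μ hμ
    by_contra hcon
    push_neg at hcon
    have hmoms : ∀ k, 1 ≤ k → k ≤ K → |pObs k μ / (n:ℝ)^k - (1-q)^k/(1-q^k)| ≤ δ := by
      intro k h1 h2
      have h3 := hcon k (Finset.mem_Icc.mpr ⟨h1, h2⟩)
      rw [Set.mem_setOf_eq] at h3
      push_neg at h3
      exact (h3 hμ.1).le
    have hNn : N ≤ n := le_trans (le_max_left _ _) hn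
    have hrow := (hD n hNn μ hμ.1 hmoms i (Nat.lt_succ_self i)).2
    have hn1 : 1 ≤ n := le_trans hN1 hNn
    have hnR : (1:ℝ) ≤ n := by exact_mod_cast hn1
    have hceil : ((2*(i:ℝ)+1)/ε) ≤ n := by
      refine le_trans (Nat.le_ceil _) ?_
      exact_mod_cast le_trans (le_max_right N _) hn
    have htail : ((i:ℝ) + 1/2)/n ≤ ε/2 := by
      rw [div_le_iff₀ (by linarith : (0:ℝ) < n)]
      rw [div_le_iff₀ hε] at hceil
      linarith
    have heq : (μ.rowLen i : ℝ)/n - (1-q)*q^i = (Aco μ i / n - cq q i) + ((i:ℝ)+1/2)/n := by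
      unfold Aco cq
      field_simp
      ring
    have habs : |(μ.rowLen i : ℝ)/n - (1-q)*q^i| < ε := by
      rw [heq]
      calc |(Aco μ i / n - cq q i) + ((i:ℝ)+1/2)/n|
          ≤ |Aco μ i / n - cq q i| + |((i:ℝ)+1/2)/n| := abs_add_le _ _
        _ < ε/2 + ε/2 := by
            have h4 : |((i:ℝ)+1/2)/n| = ((i:ℝ)+1/2)/n := abs_of_nonneg (by positivity)
            rw [h4]
            exact add_lt_add_of_lt_of_le hrow htail
        _ = ε := by ring
    exact absurd hμ.2 (not_le.mpr habs)
  refine squeeze_zero' (Filter.Eventually.of_forall fun n =>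
      tsum_nonneg fun μ => qPlancherel_nonneg hq0 hq1 _)
    (Filter.eventually_atTop.mpr ⟨max N (Nat.ceil ((2*(i:ℝ)+1)/ε)), hglue⟩) ?_
  have h5 := tendsto_finset_sum (Finset.Icc 1 K)
    (fun k hk => hyp k (Finset.mem_Icc.mp hk).1 δ hδ)
  simpa using h5
end
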